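/- arXiv:math/0511735 — 6 statements merged into one kernel-verified Lean document; each statement's English description precedes it below -/
import Mathlib

section
/- Let R be a commutative ring, n ≥ 2, and let x_{ab} ∈ R for distinct a,b ∈ {1,…,n} satisfy x_{ab} = x_{ba}. Let M be the (n−1)×(n−1) matrix with rows and columns indexed by {2,…,n}, with diagonal entries M_{bb} = Σ_{j ∈ {1,…,n}, j ≠ b} x_{jb} and off-diagonal entries M_{bc} = −x_{bc} for b ≠ c. Then det(M) = Σ_{t ∈ T_{{1,…,n}}} ∏_{{a,b} ∈ t} x_{ab}. -/
open Finset

/-- A finset of unordered pairs on `Fin n` is a tree if no edge is a loop and the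
associated simple graph is connected and acyclic. -/
def IsTreeOn (n : ℕ) (t : Finset (Sym2 (Fin n))) : Prop :=
  (∀ e ∈ t, ¬ e.IsDiag) ∧ (SimpleGraph.fromEdgeSet (t : Set (Sym2 (Fin n)))).IsTree

/-- The inclusion of `{2,…,n}` (as `Fin (n-1)`) into `{1,…,n}` (as `Fin n`). -/
def emb1 (n : ℕ) (i : Fin (n - 1)) : Fin n := ⟨i + 1, by omega⟩

/-- The matrix `M` of the weighted matrix-tree theorem, with rows and columns indexed by
`{2,…,n}`: diagonal entries `Σ_{j ≠ b} x_{jb}`, off-diagonal entries `-x_{bc}`. -/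
def kirchhoff (R : Type*) [CommRing R] (n : ℕ) (x : Fin n → Fin n → R) :
    Matrix (Fin (n - 1)) (Fin (n - 1)) R :=
  Matrix.of fun i j =>
    if i = j then ∑ q ∈ Finset.univ.erase (emb1 n i), x q (emb1 n i)
    else - x (emb1 n i) (emb1 n j)

open Matrix

namespace MTT

variable {m : ℕ}

/-- The total step function on `Fin (m+1)` associated to `f`. -/
def F (f : Fin m → Fin (m+1)) : Fin (m+1) → Fin (m+1) :=
  fun v => if h : (v : ℕ) = 0 then 0 else f ⟨(v : ℕ) - 1, by omega⟩

lemma emb1_val (i : Fin m) : (emb1 (m+1) i : ℕ) = (i : ℕ) + 1 := rfl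

lemma emb1_ne_zero (i : Fin m) : emb1 (m+1) i ≠ 0 := by
  intro h
  have := congrArg Fin.val h
  simp [emb1_val] at this

lemma emb1_inj : Function.Injective (emb1 (m+1)) := by
  intro a b h
  have := congrArg Fin.val h
  simp only [emb1_val] at this
  exact Fin.ext (by omega)

lemma exists_emb1 {v : Fin (m+1)} (hv : v ≠ 0) : ∃ i, emb1 (m+1) i = v := by
  have hv' : (v : ℕ) ≠ 0 := by
    intro h; exact hv (Fin.ext (by simpa using h))
  refine ⟨⟨(v : ℕ) - 1, by omega⟩, ?_⟩
  apply Fin.ext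
  simp only [emb1_val]
  omega

lemma F_zero (f : Fin m → Fin (m+1)) : F f 0 = 0 := by simp [F]

lemma F_emb1 (f : Fin m → Fin (m+1)) (i : Fin m) : F f (emb1 (m+1) i) = f i := by
  have h : ((emb1 (m+1) i : Fin (m+1)) : ℕ) ≠ 0 := by simp [emb1_val]
  simp only [F, dif_neg h]
  exact congrArg f (Fin.ext (by simp [emb1_val]))

lemma F_iterate_zero (f : Fin m → Fin (m+1)) (k : ℕ) : (F f)^[k] 0 = 0 := by
  induction k with
  | zero => rfl
  | succ k ih => rw [Function.iterate_succ_apply', ih, F_zero]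

/-- `f` is spanning if every vertex eventually reaches the root `0`. -/
def Spanning (f : Fin m → Fin (m+1)) : Prop := ∀ v, ∃ k, (F f)^[k] v = 0

lemma iterate_mul_self {f : Fin m → Fin (m+1)} {v : Fin (m+1)} {p : ℕ}
    (h : (F f)^[p] v = v) (c : ℕ) : (F f)^[c * p] v = v := by
  induction c with
  | zero => simp
  | succ c ih => rw [Nat.succ_mul, Function.iterate_add_apply, h, ih]

lemma Spanning.no_period {f : Fin m → Fin (m+1)} (hf : Spanning f) {v : Fin (m+1)}
    (hv : v ≠ 0) {p : ℕ} (hp : 0 < p) : (F f)^[p] v ≠ v := by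
  intro h
  obtain ⟨j, hj⟩ := hf v
  have h1 : (F f)^[(j + 1) * p] v = v := iterate_mul_self h _
  have hle : j ≤ (j + 1) * p := by nlinarith
  have h2 : (j + 1) * p = ((j + 1) * p - j) + j := by omega
  rw [h2, Function.iterate_add_apply, hj, F_iterate_zero] at h1
  exact hv h1.symm

noncomputable def depth {f : Fin m → Fin (m+1)} (hf : Spanning f) (v : Fin (m+1)) : ℕ :=
  Nat.find (hf v)

lemma depth_spec {f : Fin m → Fin (m+1)} (hf : Spanning f) (v : Fin (m+1)) :
    (F f)^[depth hf v] v = 0 := Nat.find_spec (hf v)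

lemma depth_F_lt {f : Fin m → Fin (m+1)} (hf : Spanning f) {v : Fin (m+1)} (hv : v ≠ 0) :
    depth hf (F f v) < depth hf v := by
  have h0 : depth hf v ≠ 0 := by
    intro h
    have := depth_spec hf v
    rw [h] at this
    exact hv this
  have hs : (F f)^[depth hf v - 1] (F f v) = 0 := by
    have h2 : (F f)^[depth hf v - 1 + 1] v = 0 := by
      have : depth hf v - 1 + 1 = depth hf v := by omega
      rw [this]; exact depth_spec hf v
    rw [Function.iterate_succ_apply] at h2
    exact h2
  have : depth hf (F f v) ≤ depth hf v - 1 := Nat.find_le hs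
  omega

/-- The `0/±1` matrix appearing in the multilinear expansion of the Kirchhoff matrix. -/
def Nmat (R : Type*) [CommRing R] (f : Fin m → Fin (m+1)) : Matrix (Fin m) (Fin m) R :=
  Matrix.of fun i j => (if i = j then (1:R) else 0) - (if f i = emb1 (m+1) j then 1 else 0)

variable {R : Type*} [CommRing R]

lemma det_Nmat_of_spanning {f : Fin m → Fin (m+1)} (hf : Spanning f) :
    (Nmat R f).det = 1 := by
  classical
  set b : Fin m → ℕ := fun i => depth hf (emb1 (m+1) i) with hbdef
  have hb : ∀ i j : Fin m, f i = emb1 (m+1) j → b j < b i := by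
    intro i j h
    have h1 : F f (emb1 (m+1) i) = emb1 (m+1) j := by rw [F_emb1, h]
    have := depth_F_lt hf (emb1_ne_zero i)
    rw [h1] at this
    exact this
  rw [← Matrix.det_transpose]
  have hbt : ((Nmat R f)ᵀ).BlockTriangular b := by
    intro i j hij
    have hne : j ≠ i := by rintro rfl; exact lt_irrefl _ hij
    have hne2 : f j ≠ emb1 (m+1) i := by
      intro h
      exact absurd (hb j i h) (by omega)
    simp [Nmat, Matrix.transpose_apply, hne, hne2]
  rw [hbt.det]
  apply Finset.prod_eq_one
  intro a _
  have h1 : ((Nmat R f)ᵀ).toSquareBlock b a = 1 := by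
    ext ⟨i, hi⟩ ⟨j, hj⟩
    by_cases hij : i = j
    · subst hij
      have hne2 : f i ≠ emb1 (m+1) i := by
        intro h
        have := hb i i h
        omega
      simp [Matrix.toSquareBlock_def, Nmat, Matrix.transpose_apply, hne2, Matrix.one_apply]
    · have hne2 : f j ≠ emb1 (m+1) i := by
        intro h
        have h2 := hb j i h
        rw [hi, hj] at h2
        omega
      simp [Matrix.toSquareBlock_def, Nmat, Matrix.transpose_apply, Ne.symm hij, hne2,
        Matrix.one_apply, Subtype.ext_iff, hij]
  rw [h1, Matrix.det_one]

lemma det_eq_zero_of_vecMul {N : Matrix (Fin m) (Fin m) R} {c : Fin m → R}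
    {i0 : Fin m} (hc : c i0 = 1) (h : Matrix.vecMul c N = 0) : N.det = 0 := by
  have h2 : Matrix.vecMul c (N * N.adjugate) = 0 := by
    rw [← Matrix.vecMul_vecMul, h]
    simp
  rw [Matrix.mul_adjugate] at h2
  have h3 := congrFun h2 i0
  simpa [Matrix.vecMul, dotProduct, Finset.sum_ite_eq', hc, Matrix.smul_apply,
    Matrix.one_apply] using h3

lemma det_Nmat_of_not_spanning {f : Fin m → Fin (m+1)} (hf : ¬ Spanning f) :
    (Nmat R f).det = 0 := by
  classical
  rw [Spanning, not_forall] at hf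
  obtain ⟨v, hv⟩ := hf
  push_neg at hv
  -- extract a cycle
  obtain ⟨w, p, hp, hw, hw0⟩ : ∃ w p, 0 < p ∧ (F f)^[p] w = w ∧ ∀ k, (F f)^[k] w ≠ 0 := by
    obtain ⟨a, c, hac, heq⟩ := Fintype.exists_ne_map_eq_of_card_lt
      (fun k : Fin (m+2) => (F f)^[(k:ℕ)] v) (by simp)
    rcases Nat.lt_or_ge (a:ℕ) (c:ℕ) with h | h
    · refine ⟨(F f)^[(a:ℕ)] v, (c:ℕ) - a, by omega, ?_, ?_⟩
      · rw [← Function.iterate_add_apply]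
        have he : (c:ℕ) - a + a = c := by omega
        rw [he, ← heq]
      · intro k
        rw [← Function.iterate_add_apply]
        exact hv _
    · have h' : (c:ℕ) < (a:ℕ) := by
        rcases Nat.lt_or_ge (c:ℕ) (a:ℕ) with h2 | h2
        · exact h2
        · exact absurd (Fin.ext (by omega)) hac
      refine ⟨(F f)^[(c:ℕ)] v, (a:ℕ) - c, by omega, ?_, ?_⟩
      · rw [← Function.iterate_add_apply]
        have he : (a:ℕ) - c + c = a := by omega
        rw [he, heq]
      · intro k
        rw [← Function.iterate_add_apply]
        exact hv _
  set S : Finset (Fin (m+1)) := (Finset.range p).image (fun k => (F f)^[k] w) with hSdef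
  have hper : ∀ k, (F f)^[k + p] w = (F f)^[k] w := by
    intro k
    rw [Function.iterate_add_apply, hw]
  have hmem : ∀ k, (F f)^[k] w ∈ S := by
    intro k
    induction k using Nat.strong_induction_on with
    | _ k ih =>
      by_cases hk : k < p
      · exact Finset.mem_image_of_mem _ (Finset.mem_range.2 hk)
      · have hk2 : k - p + p = k := by omega
        have he := hper (k - p)
        rw [hk2] at he
        rw [he]
        exact ih _ (by omega)
  have hS0 : ∀ u ∈ S, u ≠ 0 := by
    intro u hu
    obtain ⟨k, _, rfl⟩ := Finset.mem_image.1 hu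
    exact hw0 k
  have hclosed : ∀ u ∈ S, F f u ∈ S := by
    intro u hu
    obtain ⟨k, _, rfl⟩ := Finset.mem_image.1 hu
    rw [← Function.iterate_succ_apply' (F f) k w]
    exact hmem _
  have hback : ∀ u ∈ S, (F f)^[p-1] (F f u) = u := by
    intro u hu
    obtain ⟨k, _, rfl⟩ := Finset.mem_image.1 hu
    rw [← Function.iterate_succ_apply' (F f) k w, ← Function.iterate_add_apply]
    have he : p - 1 + (k + 1) = k + p := by omega
    rw [he, hper]
  have hinj : ∀ u1 ∈ S, ∀ u2 ∈ S, F f u1 = F f u2 → u1 = u2 := by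
    intro u1 h1 u2 h2 h
    rw [← hback u1 h1, h, hback u2 h2]
  have hsurj : ∀ u ∈ S, ∃ z ∈ S, F f z = u := by
    intro u hu
    obtain ⟨k, _, rfl⟩ := Finset.mem_image.1 hu
    refine ⟨(F f)^[k + p - 1] w, hmem _, ?_⟩
    have h1 : (F f)^[k + p] w = F f ((F f)^[k + p - 1] w) := by
      conv_lhs => rw [show k + p = (k + p - 1) + 1 by omega]
      rw [Function.iterate_succ_apply']
    rw [← h1, hper]
  -- the left kernel vector
  set c : Fin m → R := fun i => if emb1 (m+1) i ∈ S then 1 else 0 with hcdef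
  have hwS : w ∈ S := hmem 0
  obtain ⟨i0, hi0⟩ := exists_emb1 (hS0 w hwS)
  have hc : c i0 = 1 := by
    rw [hcdef]
    simp only [hi0, if_pos hwS]
  apply det_eq_zero_of_vecMul hc
  funext j
  have hvm : (Matrix.vecMul c (Nmat R f)) j
      = c j - ∑ i, (if emb1 (m+1) i ∈ S ∧ f i = emb1 (m+1) j then (1:R) else 0) := by
    simp only [Matrix.vecMul, dotProduct, Nmat, Matrix.of_apply, hcdef,
      mul_sub, Finset.sum_sub_distrib]
    congr 1
    · simp [mul_ite, mul_one, mul_zero, Finset.sum_ite_eq']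
    · apply Finset.sum_congr rfl
      intro i _
      by_cases h1 : emb1 (m+1) i ∈ S <;> by_cases h2 : f i = emb1 (m+1) j <;>
        simp [h1, h2]
  rw [hvm]
  by_cases hj : emb1 (m+1) j ∈ S
  · obtain ⟨z, hz, hfz⟩ := hsurj _ hj
    obtain ⟨i1, hi1⟩ := exists_emb1 (hS0 z hz)
    have hiff : ∀ i : Fin m, (emb1 (m+1) i ∈ S ∧ f i = emb1 (m+1) j) ↔ i = i1 := by
      intro i
      constructor
      · rintro ⟨hiS, hfi⟩
        have : F f (emb1 (m+1) i) = F f (emb1 (m+1) i1) := by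
          rw [F_emb1, hfi, hi1, hfz]
        exact emb1_inj (hinj _ hiS _ (hi1 ▸ hz) this)
      · rintro rfl
        refine ⟨hi1 ▸ hz, ?_⟩
        rw [← F_emb1 f i, hi1, hfz]
    have : ∑ i, (if emb1 (m+1) i ∈ S ∧ f i = emb1 (m+1) j then (1:R) else 0)
        = ∑ i, (if i = i1 then (1:R) else 0) :=
      Finset.sum_congr rfl fun i _ => if_congr (hiff i) rfl rfl
    rw [this]
    simp [hcdef, hj]
  · have : ∀ i : Fin m, ¬ (emb1 (m+1) i ∈ S ∧ f i = emb1 (m+1) j) := by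
      rintro i ⟨hiS, hfi⟩
      apply hj
      rw [← hfi, ← F_emb1 f i]
      exact hclosed _ hiS
    have hz : ∑ i, (if emb1 (m+1) i ∈ S ∧ f i = emb1 (m+1) j then (1:R) else 0) = 0 := by
      apply Finset.sum_eq_zero
      intro i _
      rw [if_neg (this i)]
    rw [hz]
    simp [hcdef, hj]


lemma det_kirchhoff_expand (x : Fin (m+1) → Fin (m+1) → R)
    (hx : ∀ a b, x a b = x b a) :
    (kirchhoff R (m+1) x).det =
      ∑ r ∈ Fintype.piFinset (fun i : Fin m => Finset.univ.erase (emb1 (m+1) i)),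
        (∏ i, x (r i) (emb1 (m+1) i)) * (Nmat R r).det := by
  classical
  set g : (i : Fin m) → Fin (m+1) → (Fin m → R) :=
    fun i q => x q (emb1 (m+1) i) •
      (fun j => (if i = j then (1:R) else 0) - (if q = emb1 (m+1) j then 1 else 0))
    with hgdef
  have hrow : kirchhoff R (m+1) x =
      fun i => ∑ q ∈ Finset.univ.erase (emb1 (m+1) i), g i q := by
    funext i j
    simp only [Finset.sum_apply, hgdef, Pi.smul_apply, smul_eq_mul]
    by_cases hij : i = j
    · subst hij
      simp only [kirchhoff, Matrix.of_apply, if_pos rfl]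
      apply Finset.sum_congr rfl
      intro q hq
      have hq1 : q ≠ emb1 (m+1) i := (Finset.mem_erase.1 hq).1
      simp [hq1]
    · simp only [kirchhoff, Matrix.of_apply, if_neg hij]
      rw [Finset.sum_eq_single (emb1 (m+1) j)]
      · have hji : emb1 (m+1) j ≠ emb1 (m+1) i := fun h => hij (emb1_inj h).symm
        have : (i = j) = False := by simp [hij]
        simp [hij, hx (emb1 (m+1) j) (emb1 (m+1) i)]
      · intro q hq hqj
        simp [hqj, fun h => hqj (h : q = emb1 (m+1) j)]
      · intro hmem
        exfalso
        apply hmem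
        refine Finset.mem_erase.2 ⟨fun h => hij (emb1_inj h).symm, Finset.mem_univ _⟩
  rw [hrow]
  have expand := (Matrix.detRowAlternating (n := Fin m) (R := R)).toMultilinearMap.map_sum_finset
    g (fun i => Finset.univ.erase (emb1 (m+1) i))
  have hdet : Matrix.det (fun i => ∑ q ∈ Finset.univ.erase (emb1 (m+1) i), g i q)
      = ∑ r ∈ Fintype.piFinset (fun i : Fin m => Finset.univ.erase (emb1 (m+1) i)),
          Matrix.detRowAlternating (R := R) (fun i => g i (r i)) := expand
  rw [hdet]
  apply Finset.sum_congr rfl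
  intro r _
  have hsmul : (Matrix.detRowAlternating (n := Fin m) (R := R)).toMultilinearMap
      (fun i => (x (r i) (emb1 (m+1) i)) •
        (fun j => (if i = j then (1:R) else 0) - (if r i = emb1 (m+1) j then 1 else 0)))
      = (∏ i, x (r i) (emb1 (m+1) i)) •
        (Matrix.detRowAlternating (n := Fin m) (R := R)).toMultilinearMap
          (fun i j => (if i = j then (1:R) else 0) - (if r i = emb1 (m+1) j then 1 else 0)) :=
    MultilinearMap.map_smul_univ _ _ _
  have : Matrix.detRowAlternating (R := R) (fun i => g i (r i)) =
      (∏ i, x (r i) (emb1 (m+1) i)) * (Nmat R r).det := by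
    rw [hgdef]
    rw [show (Matrix.detRowAlternating (R := R)
        (fun i => x (r i) (emb1 (m+1) i) •
          (fun j => (if i = j then (1:R) else 0) - (if r i = emb1 (m+1) j then 1 else 0))) : R)
      = _ from hsmul]
    rw [smul_eq_mul]
    rfl
  rw [this]

/-- The tree associated to a spanning function: orient each non-root vertex to its parent. -/
def treeOf (f : Fin m → Fin (m+1)) : Finset (Sym2 (Fin (m+1))) :=
  Finset.image (fun i => s(emb1 (m+1) i, f i)) Finset.univ

lemma edge_inj {f : Fin m → Fin (m+1)} (hf : Spanning f) :
    Function.Injective (fun i : Fin m => s(emb1 (m+1) i, f i)) := by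
  intro i j h
  simp only [Sym2.eq, Sym2.rel_iff', Prod.mk.injEq, Prod.swap_prod_mk] at h
  rcases h with ⟨h1, h2⟩ | ⟨h1, h2⟩
  · exact emb1_inj h1
  · exfalso
    have e1 : F f (emb1 (m+1) i) = emb1 (m+1) j := by rw [F_emb1, h2]
    have e2 : F f (emb1 (m+1) j) = emb1 (m+1) i := by rw [F_emb1, ← h1]
    have h3 : (F f)^[2] (emb1 (m+1) i) = emb1 (m+1) i := by
      show F f (F f (emb1 (m+1) i)) = emb1 (m+1) i
      rw [e1, e2]
    exact hf.no_period (emb1_ne_zero i) (by norm_num) h3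

lemma treeOf_card {f : Fin m → Fin (m+1)} (hf : Spanning f) : (treeOf f).card = m := by
  have h := Finset.card_image_of_injective (Finset.univ : Finset (Fin m)) (edge_inj hf)
  rw [Finset.card_univ, Fintype.card_fin] at h
  exact h

lemma adj_treeOf {f : Fin m → Fin (m+1)} {a b : Fin (m+1)}
    (h : (SimpleGraph.fromEdgeSet (treeOf f : Set (Sym2 (Fin (m+1))))).Adj a b) :
    (a ≠ 0 ∧ F f a = b) ∨ (b ≠ 0 ∧ F f b = a) := by
  rw [SimpleGraph.fromEdgeSet_adj] at h
  obtain ⟨hmem, hne⟩ := h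
  rw [Finset.mem_coe, treeOf, Finset.mem_image] at hmem
  obtain ⟨i, -, hi⟩ := hmem
  rw [Sym2.eq, Sym2.rel_iff'] at hi
  rcases hi with hi | hi
  · rcases Prod.mk.injEq .. ▸ hi with ⟨h1, h2⟩
    left
    refine ⟨h1 ▸ emb1_ne_zero i, ?_⟩
    rw [← h1, F_emb1, h2]
  · have h1 : emb1 (m+1) i = b := congrArg Prod.fst hi
    have h2 : f i = a := congrArg Prod.snd hi
    right
    refine ⟨h1 ▸ emb1_ne_zero i, ?_⟩
    rw [← h1, F_emb1, h2]

lemma adj_treeOf_of_ne {f : Fin m → Fin (m+1)} {a : Fin (m+1)} (ha : a ≠ 0)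
    (hne : F f a ≠ a) :
    (SimpleGraph.fromEdgeSet (treeOf f : Set (Sym2 (Fin (m+1))))).Adj a (F f a) := by
  rw [SimpleGraph.fromEdgeSet_adj]
  obtain ⟨i, rfl⟩ := exists_emb1 ha
  refine ⟨?_, Ne.symm hne⟩
  rw [Finset.mem_coe, treeOf, Finset.mem_image]
  exact ⟨i, Finset.mem_univ _, by rw [F_emb1]⟩

lemma F_ne_self {f : Fin m → Fin (m+1)} (hf : Spanning f) {a : Fin (m+1)} (ha : a ≠ 0) :
    F f a ≠ a := hf.no_period ha Nat.one_pos

lemma reach_zero {f : Fin m → Fin (m+1)} (hf : Spanning f) (v : Fin (m+1)) :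
    (SimpleGraph.fromEdgeSet (treeOf f : Set (Sym2 (Fin (m+1))))).Reachable v 0 := by
  obtain ⟨k, hk⟩ := hf v
  induction k generalizing v with
  | zero => rw [show v = 0 from hk]
  | succ k ih =>
    by_cases h0 : v = 0
    · rw [h0]
    · have hadj := adj_treeOf_of_ne h0 (F_ne_self hf h0)
      rw [Function.iterate_succ_apply] at hk
      exact hadj.reachable.trans (ih _ hk)

lemma connected_treeOf {f : Fin m → Fin (m+1)} (hf : Spanning f) :
    (SimpleGraph.fromEdgeSet (treeOf f : Set (Sym2 (Fin (m+1))))).Connected := by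
  constructor
  intro u v
  exact (reach_zero hf u).trans (reach_zero hf v).symm

lemma acyclic_treeOf {f : Fin m → Fin (m+1)} (hf : Spanning f) :
    (SimpleGraph.fromEdgeSet (treeOf f : Set (Sym2 (Fin (m+1))))).IsAcyclic := by
  classical
  set G := SimpleGraph.fromEdgeSet (treeOf f : Set (Sym2 (Fin (m+1)))) with hG
  rw [SimpleGraph.isAcyclic_iff_forall_adj_isBridge]
  -- first, the core case
  have core : ∀ a : Fin (m+1), a ≠ 0 → G.Adj a (F f a) → G.IsBridge s(a, F f a) := by
    intro a ha hadj
    rw [SimpleGraph.isBridge_iff]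
    intro hreach
    set A : Set (Fin (m+1)) := {u | ∃ k, (F f)^[k] u = a} with hAdef
    have hA1 : a ∈ A := ⟨0, rfl⟩
    have hA2 : F f a ∉ A := by
      rintro ⟨k, hk⟩
      have : (F f)^[k+1] a = a := by rw [Function.iterate_succ_apply, hk]
      exact hf.no_period ha (Nat.succ_pos k) this
    have hAstep : ∀ u : Fin (m+1), u ≠ 0 → s(u, F f u) ≠ s(a, F f a) →
        (u ∈ A ↔ F f u ∈ A) := by
      intro u hu hne
      constructor
      · rintro ⟨k, hk⟩
        rcases Nat.eq_zero_or_pos k with rfl | hkpos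
        · exact absurd (by rw [show u = a from hk]) hne
        · refine ⟨k - 1, ?_⟩
          have : (F f)^[k - 1 + 1] u = a := by
            rw [show k - 1 + 1 = k by omega]; exact hk
          rw [Function.iterate_succ_apply] at this
          exact this
      · rintro ⟨k, hk⟩
        exact ⟨k + 1, by rw [Function.iterate_succ_apply, hk]⟩
    have hedge : ∀ u w : Fin (m+1),
        (G \ SimpleGraph.fromEdgeSet {s(a, F f a)}).Adj u w → (u ∈ A ↔ w ∈ A) := by
      intro u w h
      rw [SimpleGraph.sdiff_adj] at h
      obtain ⟨huw, hno⟩ := h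
      have hne : s(u, w) ≠ s(a, F f a) := by
        intro h
        apply hno
        rw [SimpleGraph.fromEdgeSet_adj]
        exact ⟨h ▸ rfl, huw.ne⟩
      rcases adj_treeOf huw with ⟨hu0, hFu⟩ | ⟨hw0, hFw⟩
      · rw [← hFu]
        exact hAstep u hu0 (by rw [hFu]; exact hne)
      · rw [← hFw]
        exact (hAstep w hw0 (by rw [hFw, Sym2.eq_swap]; exact hne)).symm
    have hwalk : ∀ u w : Fin (m+1),
        (G \ SimpleGraph.fromEdgeSet {s(a, F f a)}).Reachable u w → (u ∈ A ↔ w ∈ A) := by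
      intro u w h
      obtain ⟨p⟩ := h
      induction p with
      | nil => rfl
      | cons hadj p ih => exact (hedge _ _ hadj).trans ih
    exact hA2 ((hwalk _ _ hreach).1 hA1)
  intro u w hadj
  rcases adj_treeOf hadj with ⟨hu0, hFu⟩ | ⟨hw0, hFw⟩
  · exact hFu ▸ core u hu0 (hFu ▸ hadj)
  · rw [Sym2.eq_swap]
    exact hFw ▸ core w hw0 (hFw ▸ hadj.symm)

lemma treeOf_isTreeOn {f : Fin m → Fin (m+1)} (hf : Spanning f)
    (hgood : ∀ i, f i ≠ emb1 (m+1) i) : IsTreeOn (m+1) (treeOf f) := by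
  constructor
  · intro e he
    rw [treeOf, Finset.mem_image] at he
    obtain ⟨i, -, rfl⟩ := he
    rw [Sym2.mk_isDiag_iff]
    exact fun h => hgood i h.symm
  · exact ⟨connected_treeOf hf, acyclic_treeOf hf⟩

lemma card_of_isTreeOn {t : Finset (Sym2 (Fin (m+1)))} (ht : IsTreeOn (m+1) t) :
    t.card = m := by
  classical
  set G := SimpleGraph.fromEdgeSet (t : Set (Sym2 (Fin (m+1)))) with hG
  letI : Fintype G.edgeSet := Set.Finite.fintype (Set.toFinite _)
  have h2 := ht.2.card_edgeFinset
  rw [Fintype.card_fin] at h2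
  have h3 : G.edgeSet = ↑t := by
    rw [hG, SimpleGraph.edgeSet_fromEdgeSet]
    ext e
    simp only [Set.mem_diff, Finset.mem_coe, Set.mem_setOf_eq, and_iff_left_iff_imp]
    exact fun he => ht.1 e he
  have h4 : G.edgeFinset = t := by
    ext e
    rw [SimpleGraph.mem_edgeFinset, h3, Finset.mem_coe]
  rw [h4] at h2
  omega

lemma exists_spanning_of_isTreeOn {t : Finset (Sym2 (Fin (m+1)))} (ht : IsTreeOn (m+1) t) :
    ∃ f : Fin m → Fin (m+1), (∀ i, f i ≠ emb1 (m+1) i) ∧ Spanning f ∧ treeOf f = t := by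
  classical
  set G := SimpleGraph.fromEdgeSet (t : Set (Sym2 (Fin (m+1)))) with hG
  have hconn := ht.2.isConnected
  have hstep : ∀ v : Fin (m+1), v ≠ 0 → ∃ w, G.Adj v w ∧ G.dist w 0 < G.dist v 0 := by
    intro v hv
    have hr : G.Reachable v 0 := hconn.preconnected v 0
    obtain ⟨p, hlen⟩ := hr.exists_walk_length_eq_dist
    cases p with
    | nil => exact absurd rfl hv
    | @cons _ u _ h q =>
      refine ⟨u, h, ?_⟩
      have h1 : G.dist u 0 ≤ q.length := SimpleGraph.dist_le q
      rw [SimpleGraph.Walk.length_cons] at hlen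
      omega
  choose wfun hw hd using hstep
  set f : Fin m → Fin (m+1) := fun i => wfun (emb1 (m+1) i) (emb1_ne_zero i) with hfdef
  have hFv : ∀ (v : Fin (m+1)) (hv : v ≠ 0), F f v = wfun v hv := by
    intro v hv
    obtain ⟨i, rfl⟩ := exists_emb1 hv
    rw [F_emb1]
  have hgood : ∀ i, f i ≠ emb1 (m+1) i := by
    intro i h
    exact (hw (emb1 (m+1) i) (emb1_ne_zero i)).ne' h
  have hspan : Spanning f := by
    have hd2 : ∀ n, ∀ v : Fin (m+1), G.dist v 0 ≤ n → ∃ k, (F f)^[k] v = 0 := by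
      intro n
      induction n with
      | zero =>
        intro v hv
        have : v = 0 := hconn.dist_eq_zero_iff.mp (Nat.le_zero.1 hv)
        exact ⟨0, this⟩
      | succ n ih =>
        intro v hv
        by_cases h0 : v = 0
        · exact ⟨0, h0⟩
        · have hlt := hd v h0
          obtain ⟨k, hk⟩ := ih (wfun v h0) (by omega)
          exact ⟨k + 1, by rw [Function.iterate_succ_apply, hFv v h0, hk]⟩
    exact fun v => hd2 _ v le_rfl
  have hsub : treeOf f ⊆ t := by
    intro e he
    rw [treeOf, Finset.mem_image] at he
    obtain ⟨i, -, rfl⟩ := he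
    have hadj := hw (emb1 (m+1) i) (emb1_ne_zero i)
    rw [hG, SimpleGraph.fromEdgeSet_adj] at hadj
    exact hadj.1
  have hcard := card_of_isTreeOn ht
  have heq : treeOf f = t :=
    Finset.eq_of_subset_of_card_le hsub (by rw [hcard, treeOf_card hspan])
  exact ⟨f, hgood, hspan, heq⟩

lemma treeOf_inj {f g : Fin m → Fin (m+1)} (hf : Spanning f) (hg : Spanning g)
    (h : treeOf f = treeOf g) : f = g := by
  classical
  by_contra hne
  set D : Finset (Fin m) := Finset.univ.filter (fun i => f i ≠ g i) with hDdef
  have hDne : D.Nonempty := by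
    obtain ⟨i0, hi0⟩ := Function.ne_iff.1 hne
    exact ⟨i0, by simp [hDdef, hi0]⟩
  obtain ⟨i, hiD, hmax⟩ := Finset.exists_max_image D (fun i => depth hf (emb1 (m+1) i)) hDne
  have hfg : f i ≠ g i := by
    have := Finset.mem_filter.1 hiD
    exact this.2
  have hmem : s(emb1 (m+1) i, g i) ∈ treeOf f := by
    rw [h, treeOf, Finset.mem_image]
    exact ⟨i, Finset.mem_univ _, rfl⟩
  rw [treeOf, Finset.mem_image] at hmem
  obtain ⟨j, -, hj⟩ := hmem
  rw [Sym2.eq, Sym2.rel_iff'] at hj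
  rcases hj with hj | hj
  · have h1 : emb1 (m+1) j = emb1 (m+1) i := congrArg Prod.fst hj
    have h2 : f j = g i := congrArg Prod.snd hj
    have hji : j = i := emb1_inj h1
    exact hfg (hji ▸ h2)
  · have h1 : emb1 (m+1) j = g i := congrArg Prod.fst hj
    have h2 : f j = emb1 (m+1) i := congrArg Prod.snd hj
    by_cases hgj : g j = f j
    · -- 2-cycle for g
      have e1 : F g (emb1 (m+1) i) = emb1 (m+1) j := by rw [F_emb1, ← h1]
      have e2 : F g (emb1 (m+1) j) = emb1 (m+1) i := by rw [F_emb1, hgj, h2]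
      have h3 : (F g)^[2] (emb1 (m+1) i) = emb1 (m+1) i := by
        show F g (F g (emb1 (m+1) i)) = emb1 (m+1) i
        rw [e1, e2]
      exact hg.no_period (emb1_ne_zero i) (by norm_num) h3
    · have hjD : j ∈ D := by
        simp only [hDdef, Finset.mem_filter, Finset.mem_univ, true_and]
        exact fun hc => hgj hc.symm
      have hlt : depth hf (emb1 (m+1) i) < depth hf (emb1 (m+1) j) := by
        have h5 := depth_F_lt hf (v := emb1 (m+1) j) (emb1_ne_zero j)
        rw [F_emb1 f j, h2] at h5
        exact h5
      have := hmax j hjD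
      omega

end MTT

open scoped Classical in
/-- Weighted matrix-tree theorem: `det M = Σ_{t ∈ T_{[n]}} Π_{{a,b} ∈ t} x_{ab}`. -/
theorem det_kirchhoff_eq_sum_trees (R : Type*) [CommRing R] (n : ℕ) (hn : 2 ≤ n)
    (x : Fin n → Fin n → R) (hx : ∀ a b, x a b = x b a) :
    (kirchhoff R n x).det =
      ∑ t ∈ Finset.univ.filter (IsTreeOn n), ∏ e ∈ t, Sym2.lift ⟨x, hx⟩ e := by
  obtain ⟨m, rfl⟩ : ∃ m, n = m + 1 := ⟨n - 1, by omega⟩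
  classical
  rw [MTT.det_kirchhoff_expand x hx]
  rw [← Finset.sum_filter_add_sum_filter_not
    (Fintype.piFinset fun i : Fin m => Finset.univ.erase (emb1 (m+1) i))
    (fun r => MTT.Spanning r)]
  have h2 : ∀ r ∈ (Fintype.piFinset fun i : Fin m =>
      Finset.univ.erase (emb1 (m+1) i)).filter (fun r => ¬ MTT.Spanning r),
      (∏ i, x (r i) (emb1 (m+1) i)) * (MTT.Nmat R r).det = 0 := by
    intro r hr
    rw [MTT.det_Nmat_of_not_spanning (Finset.mem_filter.1 hr).2, mul_zero]
  rw [Finset.sum_eq_zero h2, add_zero]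
  have h3 : ∀ r ∈ (Fintype.piFinset fun i : Fin m =>
      Finset.univ.erase (emb1 (m+1) i)).filter (fun r => MTT.Spanning r),
      (∏ i, x (r i) (emb1 (m+1) i)) * (MTT.Nmat R r).det
        = ∏ i, x (r i) (emb1 (m+1) i) := by
    intro r hr
    rw [MTT.det_Nmat_of_spanning (Finset.mem_filter.1 hr).2, mul_one]
  rw [Finset.sum_congr rfl h3]
  refine Finset.sum_bij (fun r _ => MTT.treeOf r) ?_ ?_ ?_ ?_
  · intro r hr
    obtain ⟨hpi, hsp⟩ := Finset.mem_filter.1 hr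
    rw [Finset.mem_filter]
    refine ⟨Finset.mem_univ _, MTT.treeOf_isTreeOn hsp ?_⟩
    intro i
    exact (Finset.mem_erase.1 (Fintype.mem_piFinset.1 hpi i)).1
  · intro r1 h1 r2 hh2 heq
    exact MTT.treeOf_inj (Finset.mem_filter.1 h1).2 (Finset.mem_filter.1 hh2).2 heq
  · intro t ht
    obtain ⟨g, hgood, hspan, heq⟩ :=
      MTT.exists_spanning_of_isTreeOn (Finset.mem_filter.1 ht).2
    refine ⟨g, ?_, heq⟩
    rw [Finset.mem_filter]
    exact ⟨Fintype.mem_piFinset.2 fun i =>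
      Finset.mem_erase.2 ⟨hgood i, Finset.mem_univ _⟩, hspan⟩
  · intro r hr
    have hsp := (Finset.mem_filter.1 hr).2
    show ∏ i : Fin m, x (r i) (emb1 (m+1) i) = ∏ e ∈ MTT.treeOf r, Sym2.lift ⟨x, hx⟩ e
    have him : ∏ e ∈ MTT.treeOf r, Sym2.lift ⟨x, hx⟩ e
        = ∏ i : Fin m, Sym2.lift ⟨x, hx⟩ s(emb1 (m+1) i, r i) :=
      Finset.prod_image (fun a _ b _ hab => MTT.edge_inj hsp hab)
    rw [him]
    apply Finset.prod_congr rfl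
    intro i _
    rw [Sym2.lift_mk]
    exact (hx _ _).symm
end

section
/- If Ω satisfies Condition (*), then the greatest common divisor, taken over all trees t on the vertex set {1,…,k+2}, of the products ∏_{{p,q} ∈ t} |Δ_{pq}|, equals 1. -/
open Finset

/-- Determinant of the submatrix of `Ω` obtained by deleting the rows in `s`. -/
noncomputable def minorDet (k : ℕ) (Ω : Matrix (Fin (k + 2)) (Fin k) ℤ)
    (s : Finset (Fin (k + 2))) : ℤ :=
  if h : sᶜ.card = k then (Ω.submatrix (sᶜ.orderEmbOfFin h) id).det else 0

/-- `Δ_{pq}`: determinant of `Ω` with rows `p` and `q` deleted. -/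
noncomputable def Delta (k : ℕ) (Ω : Matrix (Fin (k + 2)) (Fin k) ℤ) (p q : Fin (k + 2)) : ℤ :=
  minorDet k Ω {p, q}

theorem Delta_symm (k : ℕ) (Ω : Matrix (Fin (k + 2)) (Fin k) ℤ) (p q : Fin (k + 2)) :
    Delta k Ω p q = Delta k Ω q p := by
  unfold Delta; rw [Finset.pair_comm]

/-- Condition (*). -/
def CondStar (k : ℕ) (Ω : Matrix (Fin (k + 2)) (Fin k) ℤ) : Prop :=
  (∀ p q : Fin (k + 2), p ≠ q → Delta k Ω p q ≠ 0) ∧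
  (∀ p : Fin (k + 2), (Finset.univ.erase p).gcd (fun q => (Delta k Ω p q).natAbs) = 1)

/-- The sign `ε^p_q`. -/
noncomputable def eps (k : ℕ) (Ω : Matrix (Fin (k + 2)) (Fin k) ℤ) (p q : Fin (k + 2)) : ℤ :=
  (-1) ^ ((p : ℕ) + (q : ℕ)) * Int.sign ((p : ℤ) - (q : ℤ)) * Int.sign (Delta k Ω p q)

/-- `v_p = Σ_i Ω_{pi} x_i`. -/
noncomputable def vP (k : ℕ) (Ω : Matrix (Fin (k + 2)) (Fin k) ℤ) (p : Fin (k + 2)) :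
    MvPolynomial (Fin k) ℤ :=
  ∑ i : Fin k, MvPolynomial.C (Ω p i) * MvPolynomial.X i

open scoped Classical in
/-- `Σ_{t tree on [k+2]} Π_{{p,q} ∈ t} |Δ_{pq}|`. -/
noncomputable def treeSum (k : ℕ) (Ω : Matrix (Fin (k + 2)) (Fin k) ℤ) : ℕ :=
  ∑ t ∈ Finset.univ.filter (IsTreeOn (k + 2)),
    ∏ e ∈ t, Sym2.lift ⟨fun p q => (Delta k Ω p q).natAbs,
      fun p q => by simp only [Delta_symm]⟩ e


open Matrix

section DdDefs

variable {R : Type*} [CommRing R]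

/-- Square matrix: first `k` columns are `Ω`, last two are indicator columns of `a`, `b`. -/
def DMat (k : ℕ) (Ω : Matrix (Fin (k + 2)) (Fin k) R) (a b : Fin (k + 2)) :
    Matrix (Fin (k + 2)) (Fin (k + 2)) R :=
  Matrix.of fun i j =>
    Sum.elim (fun j' : Fin k => Ω i j')
      (fun j' : Fin 2 => if j' = 0 then (if i = a then (1 : R) else 0)
        else (if i = b then 1 else 0))
      (finSumFinEquiv.symm j)

def Dd (k : ℕ) (Ω : Matrix (Fin (k + 2)) (Fin k) R) (a b : Fin (k + 2)) : R :=
  (DMat k Ω a b).det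

lemma col_ne_lr {k : ℕ} (i : Fin k) (j' : Fin 2) :
    (finSumFinEquiv (Sum.inl i) : Fin (k + 2)) ≠ finSumFinEquiv (Sum.inr j') :=
  finSumFinEquiv.injective.ne (by simp)

lemma col_ne_01 {k : ℕ} :
    (finSumFinEquiv (Sum.inr (0 : Fin 2)) : Fin (k + 2)) ≠ finSumFinEquiv (Sum.inr (1 : Fin 2)) :=
  finSumFinEquiv.injective.ne (by simp)

lemma Dd_self (k : ℕ) (Ω : Matrix (Fin (k + 2)) (Fin k) R) (a : Fin (k + 2)) :
    Dd k Ω a a = 0 := by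
  apply det_zero_of_column_eq col_ne_01
  intro r
  simp [DMat]

lemma Dd_swap (k : ℕ) (Ω : Matrix (Fin (k + 2)) (Fin k) R) (a b : Fin (k + 2)) :
    Dd k Ω b a = - Dd k Ω a b := by
  have hM : DMat k Ω b a
      = (DMat k Ω a b).submatrix id
        (Equiv.swap (finSumFinEquiv (Sum.inr 0)) (finSumFinEquiv (Sum.inr 1))) := by
    ext r j
    obtain ⟨x, rfl⟩ := finSumFinEquiv.surjective j
    rcases x with i' | j'
    · rw [Matrix.submatrix_apply, id_eq, Equiv.swap_apply_of_ne_of_ne (col_ne_lr i' 0) (col_ne_lr i' 1)]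
      simp [DMat]
    · fin_cases j'
      · rw [Matrix.submatrix_apply, id_eq,
          show finSumFinEquiv (Sum.inr (⟨0, by omega⟩ : Fin 2)) = finSumFinEquiv (Sum.inr (0 : Fin 2)) from rfl,
          Equiv.swap_apply_left]
        simp [DMat]
      · rw [Matrix.submatrix_apply, id_eq,
          show finSumFinEquiv (Sum.inr (⟨1, by omega⟩ : Fin 2)) = finSumFinEquiv (Sum.inr (1 : Fin 2)) from rfl,
          Equiv.swap_apply_right]
        simp [DMat]
  rw [Dd, hM, det_permute', Equiv.Perm.sign_swap col_ne_01]
  simp [Dd]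

/-- linearity of det in one column, for a finite linear combination. -/
lemma det_updateColumn_lin {n m : Type*} [DecidableEq n] [Fintype n]
    (B : Matrix n n R) (j : n) (s : Finset m) (w : m → R) (v : m → n → R) :
    (B.updateCol j fun r => ∑ p ∈ s, w p * v p r).det
      = ∑ p ∈ s, w p * (B.updateCol j (v p)).det := by
  classical
  induction s using Finset.induction_on with
  | empty =>
      simp only [Finset.sum_empty]
      exact det_eq_zero_of_column_eq_zero j (fun i => by simp)
  | @insert p s hp ih =>
      rw [Finset.sum_insert hp]
      have h1 : (fun r => ∑ q ∈ insert p s, w q * v q r)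
          = (fun r => w p * v p r) + fun r => ∑ q ∈ s, w q * v q r := by
        funext r; simp [Finset.sum_insert hp]
      rw [h1, det_updateCol_add]
      have h2 : (fun r => w p * v p r) = w p • v p := by funext r; simp [mul_comm]
      rw [h2, det_updateCol_smul, ih]

/-- The key "kernel" identity. -/
lemma sum_Dd_mul (k : ℕ) (Ω : Matrix (Fin (k + 2)) (Fin k) R) (a : Fin (k + 2)) (i : Fin k) :
    ∑ p, Dd k Ω a p * Ω p i = 0 := by
  classical
  have hrepr : ∀ p, DMat k Ω a p
      = (DMat k Ω a a).updateCol (finSumFinEquiv (Sum.inr 1))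
          (fun r => if r = p then (1 : R) else 0) := by
    intro p
    ext r j
    obtain ⟨x, rfl⟩ := finSumFinEquiv.surjective j
    rcases x with i' | j'
    · rw [Matrix.updateCol_ne (col_ne_lr i' 1)]
      simp [DMat]
    · fin_cases j'
      · rw [show finSumFinEquiv (Sum.inr (⟨0, by omega⟩ : Fin 2)) = finSumFinEquiv (Sum.inr (0 : Fin 2)) from rfl,
          Matrix.updateCol_ne col_ne_01]
        simp [DMat]
      · rw [show finSumFinEquiv (Sum.inr (⟨1, by omega⟩ : Fin 2)) = finSumFinEquiv (Sum.inr (1 : Fin 2)) from rfl,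
          Matrix.updateCol_self]
        simp [DMat]
  have hcol : (fun r => ∑ p, Ω p i * (if r = p then (1:R) else 0)) = fun r => Ω r i := by
    funext r
    simp [mul_ite, Finset.sum_ite_eq]
  calc ∑ p, Dd k Ω a p * Ω p i
      = ∑ p, Ω p i * ((DMat k Ω a a).updateCol (finSumFinEquiv (Sum.inr 1))
          (fun r => if r = p then (1 : R) else 0)).det := by
        refine Finset.sum_congr rfl fun p _ => ?_
        rw [Dd, hrepr p, mul_comm]
    _ = ((DMat k Ω a a).updateCol (finSumFinEquiv (Sum.inr 1))
          (fun r => ∑ p, Ω p i * (if r = p then (1:R) else 0))).det := by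
        rw [det_updateColumn_lin]
    _ = ((DMat k Ω a a).updateCol (finSumFinEquiv (Sum.inr 1)) (fun r => Ω r i)).det := by
        rw [hcol]
    _ = 0 := by
        apply det_zero_of_column_eq (col_ne_lr i 1)
        intro r
        rw [Matrix.updateCol_ne (col_ne_lr i 1), Matrix.updateCol_self]
        simp [DMat]

end DdDefs

section GG
variable {R : Type*} [CommRing R]

lemma card_pair_compl {k : ℕ} (a b : Fin (k + 2)) (hab : a ≠ b) :
    ({a, b}ᶜ : Finset (Fin (k + 2))).card = k := by
  rw [Finset.card_compl, Finset.card_insert_of_notMem (by simpa using hab),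
    Finset.card_singleton]
  simp

/-- The enumeration of the complement of `{a,b}`. -/
noncomputable def ffun {k : ℕ} (a b : Fin (k + 2)) (hab : a ≠ b) : Fin k → Fin (k + 2) :=
  ⇑(({a, b}ᶜ : Finset (Fin (k + 2))).orderEmbOfFin (card_pair_compl a b hab))

lemma ffun_ne {k : ℕ} (a b : Fin (k + 2)) (hab : a ≠ b) (j : Fin k) :
    ffun a b hab j ≠ a ∧ ffun a b hab j ≠ b := by
  have h := Finset.orderEmbOfFin_mem ({a, b}ᶜ : Finset (Fin (k + 2))) (card_pair_compl a b hab) j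
  simp only [Finset.mem_compl, Finset.mem_insert, Finset.mem_singleton] at h
  push_neg at h
  exact h

noncomputable def gg {k : ℕ} (a b : Fin (k + 2)) (hab : a ≠ b) :
    (Fin k ⊕ Fin 2) ≃ Fin (k + 2) := by
  refine Equiv.ofBijective
    (Sum.elim (ffun a b hab) (fun j' => if j' = 0 then a else b))
    ((Fintype.bijective_iff_injective_and_card _).mpr ⟨?_, by simp⟩)
  rintro (x | x) (y | y) h <;> simp only [Sum.elim_inl, Sum.elim_inr] at h
  · exact congrArg Sum.inl ((({a, b}ᶜ : Finset (Fin (k + 2))).orderEmbOfFin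
      (card_pair_compl a b hab)).injective h)
  · exfalso; rcases (ffun_ne a b hab x) with ⟨h1, h2⟩
    split at h <;> [exact h1 h; exact h2 h]
  · exfalso; rcases (ffun_ne a b hab y) with ⟨h1, h2⟩
    split at h <;> [exact h1 h.symm; exact h2 h.symm]
  · congr 1
    fin_cases x <;> fin_cases y <;> simp_all

lemma gg_inl {k : ℕ} (a b : Fin (k + 2)) (hab : a ≠ b) (j : Fin k) :
    gg a b hab (Sum.inl j) = ffun a b hab j := rfl

lemma gg_inr0 {k : ℕ} (a b : Fin (k + 2)) (hab : a ≠ b) :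
    gg a b hab (Sum.inr 0) = a := by
  simp [gg, Equiv.ofBijective]

lemma gg_inr1 {k : ℕ} (a b : Fin (k + 2)) (hab : a ≠ b) :
    gg a b hab (Sum.inr 1) = b := by
  simp [gg, Equiv.ofBijective]

lemma Dd_eq_unit_mul (k : ℕ) (Ω : Matrix (Fin (k + 2)) (Fin k) R) (a b : Fin (k + 2))
    (hab : a ≠ b) :
    ∃ ε : ℤˣ, Dd k Ω a b = ((ε : ℤ) : R) * (Ω.submatrix (ffun a b hab) id).det := by
  classical
  set σ : Equiv.Perm (Fin (k + 2)) := finSumFinEquiv.symm.trans (gg a b hab) with hσdef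
  have hσ : ∀ z, σ (finSumFinEquiv z) = gg a b hab z := fun z => by simp [hσdef]
  have hσl : ∀ j : Fin k, σ (Fin.castAdd 2 j) = ffun a b hab j := fun j => by
    have := hσ (Sum.inl j); simpa [gg_inl] using this
  have hσr0 : σ (Fin.natAdd k 0) = a := by
    have := hσ (Sum.inr 0); rw [gg_inr0] at this; simpa using this
  have hσr1 : σ (Fin.natAdd k 1) = b := by
    have := hσ (Sum.inr 1); rw [gg_inr1] at this; simpa using this
  have hP : ((DMat k Ω a b).submatrix σ id).submatrix finSumFinEquiv finSumFinEquiv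
      = fromBlocks (Ω.submatrix (ffun a b hab) id) 0
          (Matrix.of fun (j' : Fin 2) i => Ω (if j' = 0 then a else b) i) 1 := by
    ext x y
    rcases x with j | j₁ <;> rcases y with i | j₂
    · simp [hσl, DMat]
    · rcases ffun_ne a b hab j with ⟨h1, h2⟩
      fin_cases j₂ <;> simp [hσl, DMat, h1, h2]
    · fin_cases j₁ <;>
        simp [hσr0, hσr1, DMat]
    · fin_cases j₁ <;> fin_cases j₂ <;>
        simp [hσr0, hσr1, DMat, Matrix.one_apply, hab, hab.symm]
  have h1 : ((DMat k Ω a b).submatrix σ id).det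
      = ((Equiv.Perm.sign σ : ℤ) : R) * Dd k Ω a b := by
    exact_mod_cast Matrix.det_permute σ (DMat k Ω a b)
  have h2 : ((DMat k Ω a b).submatrix σ id).det = (Ω.submatrix (ffun a b hab) id).det := by
    rw [← Matrix.det_submatrix_equiv_self finSumFinEquiv, hP, Matrix.det_fromBlocks_zero₁₂,
      Matrix.det_one, mul_one]
  refine ⟨Equiv.Perm.sign σ, ?_⟩
  have h3 : ((Equiv.Perm.sign σ : ℤ) : R) * Dd k Ω a b
      = (Ω.submatrix (ffun a b hab) id).det := by rw [← h1, h2]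
  calc Dd k Ω a b
      = (((Equiv.Perm.sign σ * Equiv.Perm.sign σ : ℤˣ) : ℤ) : R) * Dd k Ω a b := by
        rw [Int.units_mul_self]; simp
    _ = ((Equiv.Perm.sign σ : ℤ) : R) * (((Equiv.Perm.sign σ : ℤ) : R) * Dd k Ω a b) := by
        push_cast; ring
    _ = ((Equiv.Perm.sign σ : ℤ) : R) * (Ω.submatrix (ffun a b hab) id).det := by rw [h3]

end GG

section Map
variable {R S : Type*} [CommRing R] [CommRing S]

lemma DMat_map (k : ℕ) (Ω : Matrix (Fin (k + 2)) (Fin k) R) (a b : Fin (k + 2)) (f : R →+* S) :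
    (DMat k Ω a b).map f = DMat k (Ω.map f) a b := by
  ext i j
  obtain ⟨x, rfl⟩ := finSumFinEquiv.surjective j
  rcases x with j' | j' <;> simp [DMat, apply_ite f]

lemma Dd_map (k : ℕ) (Ω : Matrix (Fin (k + 2)) (Fin k) R) (a b : Fin (k + 2)) (f : R →+* S) :
    Dd k (Ω.map f) a b = f (Dd k Ω a b) := by
  rw [Dd, ← DMat_map, Dd, ← RingHom.mapMatrix_apply, ← RingHom.map_det]

end Map

section Plucker

variable {F : Type*} [Field F]

lemma plucker (k : ℕ) (Ω : Matrix (Fin (k + 2)) (Fin k) F) (a b c d : Fin (k + 2))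
    (h0 : Dd k Ω a b ≠ 0) :
    Dd k Ω a b * Dd k Ω c d = Dd k Ω c b * Dd k Ω a d + Dd k Ω a c * Dd k Ω b d := by
  classical
  have hab : a ≠ b := by rintro rfl; exact h0 (Dd_self k Ω a)
  set w : Fin (k + 2) → F := fun q =>
    Dd k Ω a b * Dd k Ω c q - Dd k Ω c b * Dd k Ω a q - Dd k Ω a c * Dd k Ω b q with hw
  have hker : ∀ i, ∑ q, w q * Ω q i = 0 := by
    intro i
    have ha := sum_Dd_mul k Ω a i
    have hb := sum_Dd_mul k Ω b i
    have hc := sum_Dd_mul k Ω c i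
    calc ∑ q, w q * Ω q i
        = Dd k Ω a b * (∑ q, Dd k Ω c q * Ω q i) - Dd k Ω c b * (∑ q, Dd k Ω a q * Ω q i)
          - Dd k Ω a c * (∑ q, Dd k Ω b q * Ω q i) := by
          rw [Finset.mul_sum, Finset.mul_sum, Finset.mul_sum, ← Finset.sum_sub_distrib,
            ← Finset.sum_sub_distrib]
          exact Finset.sum_congr rfl fun q _ => by rw [hw]; ring
      _ = 0 := by rw [ha, hb, hc]; ring
  have hwa : w a = 0 := by
    rw [hw]
    simp only [Dd_self]
    rw [Dd_swap k Ω a c, Dd_swap k Ω a b]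
    ring
  have hwb : w b = 0 := by
    rw [hw]
    simp only [Dd_self]
    rw [Dd_swap k Ω b c]
    ring
  obtain ⟨u, hu⟩ := Dd_eq_unit_mul k Ω a b hab
  have hdet : IsUnit (Ω.submatrix (ffun a b hab) id).det := by
    rw [isUnit_iff_ne_zero]
    intro h
    rw [hu, h, mul_zero] at h0
    exact h0 rfl
  have hvm : (fun j => w (ffun a b hab j)) ᵥ* (Ω.submatrix (ffun a b hab) id) = 0 := by
    funext i
    have hkey := hker i
    rw [← Fintype.sum_equiv (gg a b hab) (fun x => w (gg a b hab x) * Ω (gg a b hab x) i)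
      (fun q => w q * Ω q i) (fun x => rfl)] at hkey
    rw [Fintype.sum_sum_type] at hkey
    have h2 : ∀ j' : Fin 2, w (gg a b hab (Sum.inr j')) * Ω (gg a b hab (Sum.inr j')) i = 0 := by
      simp only [Fin.forall_fin_two]
      constructor
      · rw [gg_inr0, hwa, zero_mul]
      · rw [gg_inr1, hwb, zero_mul]
    simp only [h2, Finset.sum_const_zero, add_zero, gg_inl] at hkey
    simpa [Matrix.vecMul, dotProduct] using hkey
  have hv0 : (fun j => w (ffun a b hab j)) = 0 := by
    have h3 := congrArg (fun v => v ᵥ* (Ω.submatrix (ffun a b hab) id)⁻¹) hvm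
    simpa [Matrix.vecMul_vecMul, Matrix.mul_nonsing_inv _ hdet] using h3
  have hwq : ∀ q, w q = 0 := by
    intro q
    obtain ⟨x, rfl⟩ := (gg a b hab).surjective q
    rcases x with j | j'
    · rw [gg_inl]; exact congrFun hv0 j
    · revert j'
      simp only [Fin.forall_fin_two]
      constructor
      · rw [gg_inr0]; exact hwa
      · rw [gg_inr1]; exact hwb
  have hd := hwq d
  rw [hw] at hd
  linear_combination hd

end Plucker


lemma exists_tree_le_aux {V : Type*} [Fintype V] :
    ∀ (n : ℕ) (G : SimpleGraph V), G.edgeSet.ncard ≤ n → G.Connected →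
      ∃ T : SimpleGraph V, T ≤ G ∧ T.IsTree := by
  classical
  intro n
  induction n with
  | zero =>
      intro G hn hG
      refine ⟨G, le_refl G, hG, ?_⟩
      intro v c hc
      have hnil : c ≠ SimpleGraph.Walk.nil := hc.ne_nil
      cases c with
      | nil => exact (hnil rfl).elim
      | cons h p =>
          have he : s(v, _) ∈ G.edgeSet := h
          have : G.edgeSet = ∅ := Set.ncard_eq_zero (Set.toFinite _) |>.mp (Nat.le_zero.mp hn)
          rw [this] at he
          exact he.elim
  | succ n ih =>
      intro G hn hG
      by_cases hac : G.IsAcyclic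
      · exact ⟨G, le_refl G, hG, hac⟩
      rw [SimpleGraph.isAcyclic_iff_forall_edge_isBridge] at hac
      push_neg at hac
      obtain ⟨e, he, hbr⟩ := hac
      induction e using Sym2.ind with
      | _ u v =>
      have hadj : G.Adj u v := he
      have hreach : (G \ SimpleGraph.fromEdgeSet {s(u, v)}).Reachable u v := by
        by_contra h
        exact hbr h
      set G' := G \ SimpleGraph.fromEdgeSet {s(u, v)} with hG'
      have hle : G' ≤ G := sdiff_le
      have hkey : ∀ x y, G.Adj x y → G'.Reachable x y := by
        intro x y hxy
        by_cases hxy' : s(x, y) = s(u, v)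
        · rcases Sym2.eq_iff.mp hxy' with ⟨rfl, rfl⟩ | ⟨rfl, rfl⟩
          · exact hreach
          · exact hreach.symm
        · refine SimpleGraph.Adj.reachable ?_
          rw [hG', SimpleGraph.sdiff_adj]
          refine ⟨hxy, ?_⟩
          rw [SimpleGraph.fromEdgeSet_adj]
          rintro ⟨h1, -⟩
          exact hxy' (by simpa using h1)
      have hG'conn : G'.Connected := by
        haveI : Nonempty V := hG.nonempty
        refine SimpleGraph.Connected.mk ?_
        intro x y
        obtain ⟨p⟩ := hG.preconnected x y
        clear hn
        induction p with
        | nil => rfl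
        | cons h q ihp => exact (hkey _ _ h).trans ihp
      have hedge : G'.edgeSet = G.edgeSet \ {s(u, v)} := by
        rw [hG', SimpleGraph.edgeSet_sdiff, SimpleGraph.edgeSet_fromEdgeSet,
          Set.diff_diff_right]
        have h2 : G.edgeSet ∩ {e : Sym2 V | e.IsDiag} = ∅ := by
          ext e
          simp only [Set.mem_inter_iff, Set.mem_setOf_eq, Set.mem_empty_iff_false, iff_false,
            not_and]
          exact fun hmem => SimpleGraph.not_isDiag_of_mem_edgeSet G hmem
        rw [show Sym2.diagSet = {e : Sym2 V | e.IsDiag} from rfl, h2, Set.union_empty]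
      have hcard : G'.edgeSet.ncard ≤ n := by
        rw [hedge]
        have : s(u, v) ∈ G.edgeSet := he
        have h3 := Set.ncard_diff_singleton_lt_of_mem this (Set.toFinite _)
        omega
      obtain ⟨T, hT1, hT2⟩ := ih G' hcard hG'conn
      exact ⟨T, le_trans hT1 hle, hT2⟩


lemma Dd_natAbs (k : ℕ) (Ω : Matrix (Fin (k + 2)) (Fin k) ℤ) (p q : Fin (k + 2)) (h : p ≠ q) :
    (Dd k Ω p q).natAbs = (Delta k Ω p q).natAbs := by
  obtain ⟨u, hu⟩ := Dd_eq_unit_mul k Ω p q h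
  have hD : Delta k Ω p q = (Ω.submatrix (ffun p q h) id).det := by
    rw [Delta, minorDet, dif_pos (card_pair_compl p q h)]
    rfl
  rw [hu, hD, Int.cast_id, Int.natAbs_mul, Int.units_natAbs, one_mul]

open scoped Classical in
/-- If `Ω` satisfies Condition (*), the gcd over all trees `t` on `{1,…,k+2}` of the
products `Π_{{p,q} ∈ t} |Δ_{pq}|` equals `1`. -/
theorem gcd_tree_products_eq_one (k : ℕ) (hk : 2 ≤ k) (Ω : Matrix (Fin (k + 2)) (Fin k) ℤ)
    (hΩ : CondStar k Ω) :
    (Finset.univ.filter (IsTreeOn (k + 2))).gcd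
      (fun t => ∏ e ∈ t, Sym2.lift ⟨fun p q => (Delta k Ω p q).natAbs,
        fun p q => by simp only [Delta_symm]⟩ e) = 1 := by
  by_contra hne
  obtain ⟨ℓ, hℓp, hℓd⟩ := Nat.exists_prime_and_dvd hne
  haveI : Fact ℓ.Prime := ⟨hℓp⟩
  set Ω' : Matrix (Fin (k + 2)) (Fin k) (ZMod ℓ) := Ω.map (Int.castRingHom (ZMod ℓ)) with hΩ'
  have hDd' : ∀ p q : Fin (k + 2), Dd k Ω' p q = ((Dd k Ω p q : ℤ) : ZMod ℓ) := by
    intro p q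
    rw [hΩ', Dd_map]
    rfl
  have hlink : ∀ p q : Fin (k + 2), p ≠ q →
      (Dd k Ω' p q = 0 ↔ ℓ ∣ (Delta k Ω p q).natAbs) := by
    intro p q hpq
    rw [hDd', ZMod.intCast_zmod_eq_zero_iff_dvd, Int.natCast_dvd, Dd_natAbs k Ω p q hpq]
  let G : SimpleGraph (Fin (k + 2)) :=
    { Adj := fun p q => Dd k Ω' p q ≠ 0,
      symm := ⟨by
        intro p q h h0
        apply h
        rw [show Dd k Ω' p q = - Dd k Ω' q p from Dd_swap k Ω' q p, h0, neg_zero]⟩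
      loopless := ⟨fun p h => h (Dd_self k Ω' p)⟩ }
  have hGiff : ∀ p q, G.Adj p q ↔ Dd k Ω' p q ≠ 0 := fun p q => Iff.rfl
  have hnbr : ∀ p, ∃ q, G.Adj p q := by
    intro p
    by_contra h
    push_neg at h
    have h' : ∀ q, Dd k Ω' p q = 0 := fun q => not_not.mp ((hGiff p q).not.mp (h q))
    have hdvd : ∀ q ∈ Finset.univ.erase p, ℓ ∣ (Delta k Ω p q).natAbs := by
      intro q hq
      exact (hlink p q (Finset.mem_erase.mp hq).1.symm).mp (h' q)
    have hgcd := Finset.dvd_gcd hdvd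
    rw [hΩ.2 p] at hgcd
    exact hℓp.ne_one (Nat.dvd_one.mp hgcd)
  have hconn : G.Connected := by
    refine SimpleGraph.Connected.mk ?_
    intro p q
    obtain ⟨p', hp'⟩ := hnbr p
    obtain ⟨q', hq'⟩ := hnbr q
    have h1 : Dd k Ω' p p' ≠ 0 := (hGiff p p').mp hp'
    have h2 : Dd k Ω' q q' ≠ 0 := (hGiff q q').mp hq'
    have hrel := plucker k Ω' p p' q q' h1
    by_cases h3 : Dd k Ω' p q = 0
    · have h4 : Dd k Ω' q p' * Dd k Ω' p q' ≠ 0 := by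
        intro h5
        exact (mul_ne_zero h1 h2) (by rw [hrel, h5, h3, zero_mul, add_zero])
      have h6 : Dd k Ω' p q' ≠ 0 := fun h7 => h4 (by rw [h7, mul_zero])
      exact (SimpleGraph.Adj.reachable ((hGiff p q').mpr h6)).trans
        (SimpleGraph.Adj.reachable hq'.symm)
    · exact SimpleGraph.Adj.reachable ((hGiff p q).mpr h3)
  obtain ⟨T, hTG, hTree⟩ := exists_tree_le_aux G.edgeSet.ncard G le_rfl hconn
  set t : Finset (Sym2 (Fin (k + 2))) := (Set.toFinite T.edgeSet).toFinset with ht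
  have ht_mem_iff : ∀ e, e ∈ t ↔ e ∈ T.edgeSet := fun e => Set.Finite.mem_toFinset _
  have htree : IsTreeOn (k + 2) t := by
    constructor
    · intro e hel
      exact T.not_isDiag_of_mem_edgeSet ((ht_mem_iff e).mp hel)
    · have hcoe : (t : Set (Sym2 (Fin (k + 2)))) = T.edgeSet := Set.Finite.coe_toFinset _
      rw [hcoe, SimpleGraph.fromEdgeSet_edgeSet]
      exact hTree
  have htf : t ∈ Finset.univ.filter (IsTreeOn (k + 2)) :=
    Finset.mem_filter.mpr ⟨Finset.mem_univ t, htree⟩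
  have hdvdprod : ℓ ∣ ∏ e ∈ t, Sym2.lift ⟨fun p q => (Delta k Ω p q).natAbs,
      fun p q => by simp only [Delta_symm]⟩ e :=
    dvd_trans hℓd (Finset.gcd_dvd htf)
  obtain ⟨e, het, hdvde⟩ := ((Nat.Prime.prime hℓp).dvd_finset_prod_iff _).mp hdvdprod
  revert het hdvde
  induction e using Sym2.ind with
  | _ x y =>
  intro het hdvde
  have hxy : T.Adj x y := (T.mem_edgeSet).mp ((ht_mem_iff _).mp het)
  have hGxy : G.Adj x y := hTG hxy
  have hne2 : x ≠ y := hGxy.ne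
  have hDd0 : Dd k Ω' x y ≠ 0 := (hGiff x y).mp hGxy
  apply hDd0
  refine (hlink x y hne2).mpr ?_
  simpa using hdvde
end

section
/- Suppose Ω satisfies Condition (*). If P is a prime and p,q,r ∈ {1,…,k+2} are distinct with P dividing Δ_{pq} and P dividing Δ_{qr}, then P divides Δ_{pr}. -/
open Finset

open Matrix

section extendC
variable {R : Type*} [CommRing R] {N n : ℕ}

noncomputable def extendC (s : Finset (Fin N)) (h : s.card = n) (v : Fin n → R) : Fin N → R :=
  fun j => if hj : j ∈ s then v ((s.orderIsoOfFin h).symm ⟨j, hj⟩) else 0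

lemma extendC_emb (s : Finset (Fin N)) (h : s.card = n) (v : Fin n → R) (i : Fin n) :
    extendC s h v (s.orderEmbOfFin h i) = v i := by
  have hm : s.orderEmbOfFin h i ∈ s := s.orderEmbOfFin_mem h i
  rw [extendC, dif_pos hm]
  congr 1
  rw [OrderIso.symm_apply_eq]
  exact Subtype.ext (by simp [Finset.coe_orderIsoOfFin_apply])

lemma extendC_not_mem (s : Finset (Fin N)) (h : s.card = n) (v : Fin n → R) {j : Fin N}
    (hj : j ∉ s) : extendC s h v j = 0 := dif_neg hj

lemma sum_emb (s : Finset (Fin N)) (h : s.card = n) {M : Type*} [AddCommMonoid M]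
    (f : Fin N → M) : ∑ i : Fin n, f (s.orderEmbOfFin h i) = ∑ j ∈ s, f j := by
  have e := Equiv.sum_comp (s.orderIsoOfFin h).toEquiv (fun x : {x // x ∈ s} => f ↑x)
  simp only [RelIso.coe_fn_toEquiv] at e
  calc ∑ i : Fin n, f (s.orderEmbOfFin h i)
      = ∑ i : Fin n, f ↑(s.orderIsoOfFin h i) := by
        refine Finset.sum_congr rfl fun i _ => by rw [Finset.coe_orderIsoOfFin_apply]
    _ = ∑ x : {x // x ∈ s}, f ↑x := e
    _ = ∑ j ∈ s, f j := Finset.sum_coe_sort s f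

lemma vecMul_extendC {m : ℕ} (s : Finset (Fin N)) (h : s.card = n)
    (M : Matrix (Fin N) (Fin m) R) (v : Fin n → R) :
    extendC s h v ᵥ* M = v ᵥ* M.submatrix (s.orderEmbOfFin h) id := by
  funext c
  simp only [vecMul, dotProduct, submatrix_apply, id_eq]
  have : ∀ i : Fin n, v i * M (s.orderEmbOfFin h i) c
      = extendC s h v (s.orderEmbOfFin h i) * M (s.orderEmbOfFin h i) c := fun i => by
    rw [extendC_emb]
  rw [Finset.sum_congr rfl fun i _ => this i,
    sum_emb s h (fun j => extendC s h v j * M j c)]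
  exact (Finset.sum_subset (Finset.subset_univ s)
    (fun j _ hj => by rw [extendC_not_mem s h v hj, zero_mul])).symm

lemma extendC_restrict (s : Finset (Fin N)) (h : s.card = n) (x : Fin N → R)
    (hx : ∀ j ∉ s, x j = 0) : extendC s h (fun i => x (s.orderEmbOfFin h i)) = x := by
  funext j
  by_cases hj : j ∈ s
  · rw [extendC, dif_pos hj]
    have : s.orderEmbOfFin h ((s.orderIsoOfFin h).symm ⟨j, hj⟩) = j := by
      rw [← Finset.coe_orderIsoOfFin_apply, OrderIso.apply_symm_apply]
    rw [this]
  · rw [extendC_not_mem s h _ hj, hx j hj]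

lemma extendC_zero (s : Finset (Fin N)) (h : s.card = n) :
    extendC s h (0 : Fin n → R) = 0 := by
  funext j
  by_cases hj : j ∈ s
  · rw [extendC, dif_pos hj]; rfl
  · exact extendC_not_mem s h _ hj

end extendC

section key
variable {F : Type*} [Field F] {k : ℕ}

lemma det_eq_zero_iff_relation (M : Matrix (Fin (k + 2)) (Fin k) F)
    (s : Finset (Fin (k + 2))) (h : sᶜ.card = k) :
    (M.submatrix (sᶜ.orderEmbOfFin h) id).det = 0 ↔
      ∃ x : Fin (k + 2) → F, x ≠ 0 ∧ x ᵥ* M = 0 ∧ ∀ j ∈ s, x j = 0 := by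
  rw [← Matrix.exists_vecMul_eq_zero_iff]
  constructor
  · rintro ⟨v, hv, hvM⟩
    refine ⟨extendC sᶜ h v, ?_, ?_, ?_⟩
    · intro hx
      obtain ⟨i, hi⟩ := Function.ne_iff.mp hv
      exact hi (by rw [← extendC_emb sᶜ h v i, hx]; rfl)
    · rw [vecMul_extendC, hvM]
    · intro j hj
      exact extendC_not_mem sᶜ h v (by simpa using hj)
  · rintro ⟨x, hx, hxM, hxs⟩
    have hx0 : ∀ j ∉ sᶜ, x j = 0 := fun j hj => hxs j (by simpa using hj)
    refine ⟨fun i => x (sᶜ.orderEmbOfFin h i), ?_, ?_⟩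
    · intro hv
      exact hx (by rw [← extendC_restrict sᶜ h x hx0, hv, extendC_zero])
    · rw [← vecMul_extendC, extendC_restrict sᶜ h x hx0, hxM]

end key

/-- If `P` is a prime dividing `Δ_{pq}` and `Δ_{qr}`, then `P` divides `Δ_{pr}`. -/
theorem prime_dvd_Delta_trans (k : ℕ) (hk : 2 ≤ k) (Ω : Matrix (Fin (k + 2)) (Fin k) ℤ)
    (hΩ : CondStar k Ω) (P : ℤ) (hP : Prime P) (p q r : Fin (k + 2))
    (hpq : p ≠ q) (hqr : q ≠ r) (hpr : p ≠ r)
    (h1 : P ∣ Delta k Ω p q) (h2 : P ∣ Delta k Ω q r) :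
    P ∣ Delta k Ω p r := by
  classical
  have hPnat : Nat.Prime P.natAbs := Int.prime_iff_natAbs_prime.mp hP
  haveI : Fact (Nat.Prime P.natAbs) := ⟨hPnat⟩
  set M : Matrix (Fin (k + 2)) (Fin k) (ZMod P.natAbs) :=
    Ω.map (Int.castRingHom (ZMod P.natAbs)) with hM
  -- cardinality of pair complements
  have hcard : ∀ s t : Fin (k + 2), s ≠ t →
      (({s, t} : Finset (Fin (k + 2)))ᶜ).card = k := by
    intro s t hst
    rw [Finset.card_compl, Finset.card_pair hst]
    simp
  -- divisibility criterion
  have hdvd : ∀ s t : Fin (k + 2), ∀ hst : s ≠ t,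
      (P ∣ Delta k Ω s t ↔
        ∃ x : Fin (k + 2) → ZMod P.natAbs, x ≠ 0 ∧ x ᵥ* M = 0 ∧ x s = 0 ∧ x t = 0) := by
    intro s t hst
    have hc := hcard s t hst
    have hD : Delta k Ω s t
        = (Ω.submatrix ((({s, t} : Finset (Fin (k + 2)))ᶜ).orderEmbOfFin hc) id).det := by
      rw [Delta, minorDet, dif_pos hc]
    have hcast : ((Delta k Ω s t : ℤ) : ZMod P.natAbs)
        = (M.submatrix ((({s, t} : Finset (Fin (k + 2)))ᶜ).orderEmbOfFin hc) id).det := by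
      have := RingHom.map_det (Int.castRingHom (ZMod P.natAbs))
        (Ω.submatrix ((({s, t} : Finset (Fin (k + 2)))ᶜ).orderEmbOfFin hc) id)
      rw [hD]
      simpa [RingHom.mapMatrix_apply, Matrix.submatrix_map, hM] using this
    have hdz : P ∣ Delta k Ω s t ↔ ((Delta k Ω s t : ℤ) : ZMod P.natAbs) = 0 := by
      rw [ZMod.intCast_zmod_eq_zero_iff_dvd, Int.natAbs_dvd]
    rw [hdz, hcast, det_eq_zero_iff_relation M {s, t} hc]
    constructor
    · rintro ⟨x, hx, hxM, hxs⟩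
      exact ⟨x, hx, hxM, hxs s (by simp), hxs t (by simp)⟩
    · rintro ⟨x, hx, hxM, hxs, hxt⟩
      refine ⟨x, hx, hxM, ?_⟩
      intro j hj
      rcases Finset.mem_insert.mp hj with h' | h'
      · rwa [h']
      · rw [Finset.mem_singleton.mp h']; exact hxt
  -- from gcd condition: some s₀ ≠ q with P ∤ Delta q s₀
  obtain ⟨hne0, hgcd⟩ := hΩ
  have hs0 : ∃ s₀ ∈ Finset.univ.erase q, ¬ P ∣ Delta k Ω q s₀ := by
    by_contra hall
    push_neg at hall
    have hdg : P.natAbs ∣ (Finset.univ.erase q).gcd (fun t => (Delta k Ω q t).natAbs) :=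
      Finset.dvd_gcd fun t ht => Int.natAbs_dvd_natAbs.mpr (hall t ht)
    rw [hgcd q] at hdg
    exact hPnat.one_lt.ne' (Nat.eq_one_of_dvd_one hdg ▸ rfl)
  obtain ⟨s₀, hs₀mem, hs₀⟩ := hs0
  have hqs₀ : q ≠ s₀ := fun h => (Finset.mem_erase.mp hs₀mem).1 h.symm
  -- invertibility of the (q,s₀)-complement submatrix mod P
  have hcq := hcard q s₀ hqs₀
  set Aq : Matrix (Fin k) (Fin k) (ZMod P.natAbs) :=
    M.submatrix ((({q, s₀} : Finset (Fin (k + 2)))ᶜ).orderEmbOfFin hcq) id with hAq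
  have hAqdet : Aq.det ≠ 0 := by
    intro h0
    refine hs₀ ((hdvd q s₀ hqs₀).mpr ?_)
    obtain ⟨x, hx, hxM, hxs⟩ := (det_eq_zero_iff_relation M {q, s₀} hcq).mp h0
    exact ⟨x, hx, hxM, hxs q (by simp), hxs s₀ (by simp)⟩
  have hAqinv : Aq⁻¹ * Aq = 1 := Matrix.nonsing_inv_mul Aq (isUnit_iff_ne_zero.mpr hAqdet)
  -- rows of M span everything
  have hspan : Submodule.span (ZMod P.natAbs) (Set.range M.row) = ⊤ := by
    rw [eq_top_iff]
    rintro w -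
    have hw : (extendC _ hcq (w ᵥ* Aq⁻¹)) ᵥ* M = w := by
      rw [vecMul_extendC, ← hAq, Matrix.vecMul_vecMul, hAqinv, Matrix.vecMul_one]
    rw [← range_vecMulLinear M]
    exact ⟨extendC _ hcq (w ᵥ* Aq⁻¹), hw⟩
  -- kernel has dimension 2
  set K := LinearMap.ker M.vecMulLinear with hK
  have hKrank : Module.finrank (ZMod P.natAbs) K = 2 := by
    have hrn := LinearMap.finrank_range_add_finrank_ker M.vecMulLinear
    rw [range_vecMulLinear, hspan, finrank_top] at hrn
    simp only [Module.finrank_pi, Fintype.card_fin] at hrn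
    rw [hK]
    omega
  -- a relation with q-coefficient 1
  set g : Fin (k + 2) → ZMod P.natAbs :=
    Pi.single q 1 - extendC _ hcq (M q ᵥ* Aq⁻¹) with hg
  have hgK : g ∈ K := by
    rw [hK, LinearMap.mem_ker, Matrix.vecMulLinear_apply, hg, Matrix.sub_vecMul,
      Matrix.single_one_vecMul, vecMul_extendC, ← hAq, Matrix.vecMul_vecMul, hAqinv,
      Matrix.vecMul_one]
    exact sub_self _
  have hextq : ∀ v : Fin k → ZMod P.natAbs, ∀ j ∈ ({q, s₀} : Finset (Fin (k + 2))),
      extendC _ hcq v j = 0 := fun v j hj =>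
    extendC_not_mem _ hcq v (fun h => (Finset.mem_compl.mp h) hj)
  have hgq : g q = 1 := by
    rw [hg, Pi.sub_apply, Pi.single_eq_same, hextq _ q (Finset.mem_insert_self q _), sub_zero]
  -- suppose P ∤ Delta p r
  by_contra hne
  have hcp := hcard p r hpr
  set Ap : Matrix (Fin k) (Fin k) (ZMod P.natAbs) :=
    M.submatrix ((({p, r} : Finset (Fin (k + 2)))ᶜ).orderEmbOfFin hcp) id with hAp
  have hApdet : Ap.det ≠ 0 := by
    intro h0
    refine hne ((hdvd p r hpr).mpr ?_)
    obtain ⟨x, hx, hxM, hxs⟩ := (det_eq_zero_iff_relation M {p, r} hcp).mp h0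
    exact ⟨x, hx, hxM, hxs p (by simp), hxs r (by simp)⟩
  have hApinv : Ap⁻¹ * Ap = 1 := Matrix.nonsing_inv_mul Ap (isUnit_iff_ne_zero.mpr hApdet)
  -- relations e and f
  set e : Fin (k + 2) → ZMod P.natAbs :=
    Pi.single p 1 - extendC _ hcp (M p ᵥ* Ap⁻¹) with he
  set f : Fin (k + 2) → ZMod P.natAbs :=
    Pi.single r 1 - extendC _ hcp (M r ᵥ* Ap⁻¹) with hf
  have heK : e ∈ K := by
    rw [hK, LinearMap.mem_ker, Matrix.vecMulLinear_apply, he, Matrix.sub_vecMul,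
      Matrix.single_one_vecMul, vecMul_extendC, ← hAp, Matrix.vecMul_vecMul, hApinv,
      Matrix.vecMul_one]
    exact sub_self _
  have hfK : f ∈ K := by
    rw [hK, LinearMap.mem_ker, Matrix.vecMulLinear_apply, hf, Matrix.sub_vecMul,
      Matrix.single_one_vecMul, vecMul_extendC, ← hAp, Matrix.vecMul_vecMul, hApinv,
      Matrix.vecMul_one]
    exact sub_self _
  have hext0 : ∀ v : Fin k → ZMod P.natAbs, ∀ j ∈ ({p, r} : Finset (Fin (k + 2))),
      extendC _ hcp v j = 0 := fun v j hj =>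
    extendC_not_mem _ hcp v (fun h => (Finset.mem_compl.mp h) hj)
  have hmemp : p ∈ ({p, r} : Finset (Fin (k + 2))) := Finset.mem_insert_self p _
  have hmemr : r ∈ ({p, r} : Finset (Fin (k + 2))) :=
    Finset.mem_insert_of_mem (Finset.mem_singleton_self r)
  have hep : e p = 1 := by
    rw [he, Pi.sub_apply, Pi.single_eq_same, hext0 _ p hmemp, sub_zero]
  have her : e r = 0 := by
    rw [he, Pi.sub_apply, Pi.single_eq_of_ne hpr.symm, hext0 _ r hmemr, sub_zero]
  have hfp : f p = 0 := by
    rw [hf, Pi.sub_apply, Pi.single_eq_of_ne hpr, hext0 _ p hmemp, sub_zero]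
  have hfr : f r = 1 := by
    rw [hf, Pi.sub_apply, Pi.single_eq_same, hext0 _ r hmemr, sub_zero]
  -- e, f are linearly independent
  have hindep : LinearIndependent (ZMod P.natAbs) ![e, f] := by
    rw [LinearIndependent.pair_iff]
    intro a b hab
    constructor
    · have := congr_fun hab p
      simpa [hep, hfp] using this
    · have := congr_fun hab r
      simpa [her, hfr] using this
  -- span {e, f} = K
  have hspanK : Submodule.span (ZMod P.natAbs) {e, f} = K := by
    refine Submodule.eq_of_le_of_finrank_le ?_ ?_
    · rw [Submodule.span_le]
      rintro x hx
      rcases hx with h' | h'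
      · rw [h']; exact heK
      · rw [Set.mem_singleton_iff.mp h']; exact hfK
    · rw [hKrank]
      have hr : Set.range ![e, f] = {e, f} := by
        ext x
        constructor
        · rintro ⟨i, rfl⟩
          fin_cases i
          · exact Or.inl rfl
          · exact Or.inr rfl
        · rintro (rfl | rfl)
          · exact ⟨0, rfl⟩
          · exact ⟨1, rfl⟩
      have hfr2 := finrank_span_eq_card hindep
      rw [hr] at hfr2
      simp only [Fintype.card_fin] at hfr2
      rw [hfr2]
  -- get c and d
  obtain ⟨c, hc0, hcM, hcp', hcq'⟩ := (hdvd p q hpq).mp h1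
  obtain ⟨d, hd0, hdM, hdq', hdr'⟩ := (hdvd q r hqr).mp h2
  have hcK : c ∈ K := by rw [hK, LinearMap.mem_ker, Matrix.vecMulLinear_apply, hcM]
  have hdK : d ∈ K := by rw [hK, LinearMap.mem_ker, Matrix.vecMulLinear_apply, hdM]
  -- c = b₁ • f with b₁ ≠ 0, giving f q = 0
  obtain ⟨a₁, b₁, hc⟩ := Submodule.mem_span_pair.mp (hspanK ▸ hcK)
  have ha₁ : a₁ = 0 := by
    have := congr_fun hc p
    simpa [hep, hfp, hcp'] using this
  have hb₁ : b₁ ≠ 0 := by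
    intro hb
    apply hc0
    rw [← hc, ha₁, hb]
    simp
  have hfq : f q = 0 := by
    have := congr_fun hc q
    rw [ha₁] at this
    simp only [Pi.add_apply, Pi.smul_apply, smul_eq_mul, zero_mul, zero_smul, Pi.zero_apply, zero_add,
      hcq'] at this
    exact (mul_eq_zero.mp this).resolve_left hb₁
  -- d = a₂ • e with a₂ ≠ 0, giving e q = 0
  obtain ⟨a₂, b₂, hd⟩ := Submodule.mem_span_pair.mp (hspanK ▸ hdK)
  have hb₂ : b₂ = 0 := by
    have := congr_fun hd r
    simpa [her, hfr, hdr'] using this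
  have ha₂ : a₂ ≠ 0 := by
    intro ha
    apply hd0
    rw [← hd, ha, hb₂]
    simp
  have heq : e q = 0 := by
    have := congr_fun hd q
    rw [hb₂] at this
    simp only [Pi.add_apply, Pi.smul_apply, smul_eq_mul, zero_mul, zero_smul, Pi.zero_apply, add_zero,
      hdq'] at this
    exact (mul_eq_zero.mp this).resolve_left ha₂
  -- contradiction with g
  obtain ⟨a₃, b₃, hgspan⟩ := Submodule.mem_span_pair.mp (hspanK ▸ hgK)
  have hcon := congr_fun hgspan q
  rw [hgq] at hcon
  simp only [Pi.add_apply, Pi.smul_apply, smul_eq_mul, heq, hfq, mul_zero, add_zero] at hcon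
  exact one_ne_zero hcon.symm
end

section
/- If Ω satisfies Condition (*), then the additive group of homogeneous degree-2 polynomials in ℤ[x_1,…,x_k] is spanned over ℤ by the products v_p·v_q with p,q ∈ {1,…,k+2}, p ≠ q. -/
open Finset

/-! ### Auxiliary material -/

open MvPolynomial

section Aux

variable {k : ℕ} {R : Type*} [CommRing R]

/-- The linear form given by row `p` of a matrix, over an arbitrary ring. -/
noncomputable def lin (Ω' : Matrix (Fin (k + 2)) (Fin k) R) (p : Fin (k + 2)) :
    MvPolynomial (Fin k) R :=
  ∑ i : Fin k, MvPolynomial.C (Ω' p i) * MvPolynomial.X i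

/-- Generic version of `minorDet`. -/
noncomputable def minorDetR (Ω' : Matrix (Fin (k + 2)) (Fin k) R)
    (s : Finset (Fin (k + 2))) : R :=
  if h : sᶜ.card = k then (Ω'.submatrix (sᶜ.orderEmbOfFin h) id).det else 0

/-- The set of products `lin p * lin q` with `p ≠ q`. -/
def genSet (Ω' : Matrix (Fin (k + 2)) (Fin k) R) : Set (MvPolynomial (Fin k) R) :=
  {f | ∃ p q, p ≠ q ∧ f = lin Ω' p * lin Ω' q}

lemma vP_eq_lin (Ω : Matrix (Fin (k + 2)) (Fin k) ℤ) (p : Fin (k + 2)) :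
    vP k Ω p = lin Ω p := rfl

lemma Delta_eq_minorDetR (Ω : Matrix (Fin (k + 2)) (Fin k) ℤ) (p q : Fin (k + 2)) :
    Delta k Ω p q = minorDetR Ω {p, q} := rfl

lemma minorDetR_map {S : Type*} [CommRing S] (f : R →+* S)
    (Ω' : Matrix (Fin (k + 2)) (Fin k) R) (s : Finset (Fin (k + 2))) :
    minorDetR (Ω'.map f) s = f (minorDetR Ω' s) := by
  unfold minorDetR
  by_cases h : sᶜ.card = k
  · rw [dif_pos h, dif_pos h, RingHom.map_det]
    rfl
  · rw [dif_neg h, dif_neg h, map_zero]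

lemma lin_map {S : Type*} [CommRing S] (f : R →+* S)
    (Ω' : Matrix (Fin (k + 2)) (Fin k) R) (p : Fin (k + 2)) :
    lin (Ω'.map f) p = MvPolynomial.map f (lin Ω' p) := by
  unfold lin
  rw [map_sum]
  refine Finset.sum_congr rfl fun i _ => ?_
  rw [map_mul, map_X, map_C]
  rfl

lemma lin_isHomogeneous (Ω' : Matrix (Fin (k + 2)) (Fin k) R) (p : Fin (k + 2)) :
    (lin Ω' p).IsHomogeneous 1 := by
  refine IsHomogeneous.sum _ _ _ fun i _ => ?_
  simpa using (isHomogeneous_C _ (Ω' p i)).mul (isHomogeneous_X R i)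

lemma span_genSet_le (Ω' : Matrix (Fin (k + 2)) (Fin k) R) :
    Submodule.span R (genSet Ω') ≤ homogeneousSubmodule (Fin k) R 2 := by
  rw [Submodule.span_le]
  rintro f ⟨p, q, hpq, rfl⟩
  rw [SetLike.mem_coe, mem_homogeneousSubmodule]
  exact (lin_isHomogeneous Ω' p).mul (lin_isHomogeneous Ω' q)

lemma adj_smul_X (Ω' : Matrix (Fin (k + 2)) (Fin k) R) (s : Finset (Fin (k + 2)))
    (h : sᶜ.card = k) (i : Fin k) :
    minorDetR Ω' s • (X i : MvPolynomial (Fin k) R) ∈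
      Submodule.span R {f | ∃ t, t ∈ sᶜ ∧ f = lin Ω' t} := by
  classical
  set A : Matrix (Fin k) (Fin k) R := Ω'.submatrix (sᶜ.orderEmbOfFin h) id with hA
  have key : minorDetR Ω' s • (X i : MvPolynomial (Fin k) R) =
      ∑ r : Fin k, (A.adjugate i r) • lin Ω' (sᶜ.orderEmbOfFin h r) := by
    have hlin : ∀ r, lin Ω' (sᶜ.orderEmbOfFin h r) = ∑ j, C (A r j) * X j := by
      intro r; rfl
    simp only [hlin, Finset.smul_sum, C_mul', smul_smul]
    rw [Finset.sum_comm]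
    have : ∀ j : Fin k, ∑ r : Fin k, (A.adjugate i r * A r j) • (X j : MvPolynomial (Fin k) R)
        = ((A.adjugate * A) i j) • X j := by
      intro j; rw [Matrix.mul_apply, Finset.sum_smul]
    simp only [this, Matrix.adjugate_mul, Matrix.smul_apply, Matrix.one_apply, smul_eq_mul,
      mul_ite, mul_one, mul_zero, ite_smul, zero_smul]
    rw [Finset.sum_ite_eq Finset.univ i (fun j => A.det • (X j : MvPolynomial (Fin k) R))]
    simp [minorDetR, dif_pos h, hA]
  rw [key]
  refine Submodule.sum_mem _ fun r _ => Submodule.smul_mem _ _ (Submodule.subset_span ?_)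
  exact ⟨sᶜ.orderEmbOfFin h r, Finset.orderEmbOfFin_mem _ h r, rfl⟩

lemma adj_smul_lin (Ω' : Matrix (Fin (k + 2)) (Fin k) R) (s : Finset (Fin (k + 2)))
    (h : sᶜ.card = k) (r : Fin (k + 2)) :
    minorDetR Ω' s • lin Ω' r ∈
      Submodule.span R {f | ∃ t, t ∈ sᶜ ∧ f = lin Ω' t} := by
  have : minorDetR Ω' s • lin Ω' r
      = ∑ i : Fin k, (Ω' r i) • (minorDetR Ω' s • (X i : MvPolynomial (Fin k) R)) := by
    rw [lin, Finset.smul_sum]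
    refine Finset.sum_congr rfl fun i _ => ?_
    rw [C_mul', smul_comm]
  rw [this]
  exact Submodule.sum_mem _ fun i _ => Submodule.smul_mem _ _ (adj_smul_X Ω' s h i)

lemma mul_lin_mem (Ω' : Matrix (Fin (k + 2)) (Fin k) R) (u : Finset (Fin (k + 2)))
    {f : MvPolynomial (Fin k) R} (hf : f ∈ Submodule.span R {f | ∃ t, t ∈ u ∧ f = lin Ω' t})
    (r : Fin (k + 2)) (hr : r ∉ u) :
    f * lin Ω' r ∈ Submodule.span R (genSet Ω') := by
  induction hf using Submodule.span_induction with
  | mem x hx =>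
      obtain ⟨t, ht, rfl⟩ := hx
      exact Submodule.subset_span ⟨t, r, fun he => hr (he ▸ ht), rfl⟩
  | zero => simp only [zero_mul]; exact Submodule.zero_mem _
  | add x y hx hy ihx ihy => rw [add_mul]; exact Submodule.add_mem _ ihx ihy
  | smul a x hx ih => rw [smul_mul_assoc]; exact Submodule.smul_mem _ _ ih

lemma mul_mem_of_sq (Ω' : Matrix (Fin (k + 2)) (Fin k) R)
    (hsq : ∀ t, lin Ω' t * lin Ω' t ∈ Submodule.span R (genSet Ω'))
    (u u' : Finset (Fin (k + 2))) {f g : MvPolynomial (Fin k) R}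
    (hf : f ∈ Submodule.span R {f | ∃ t, t ∈ u ∧ f = lin Ω' t})
    (hg : g ∈ Submodule.span R {f | ∃ t, t ∈ u' ∧ f = lin Ω' t}) :
    f * g ∈ Submodule.span R (genSet Ω') := by
  induction hf using Submodule.span_induction with
  | mem x hx =>
      obtain ⟨t, ht, rfl⟩ := hx
      induction hg using Submodule.span_induction with
      | mem y hy =>
          obtain ⟨t', ht', rfl⟩ := hy
          rcases eq_or_ne t t' with rfl | hne
          · exact hsq t
          · exact Submodule.subset_span ⟨t, t', hne, rfl⟩
      | zero => simp only [mul_zero]; exact Submodule.zero_mem _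
      | add y z hy hz ihy ihz => rw [mul_add]; exact Submodule.add_mem _ ihy ihz
      | smul a y hy ih => rw [mul_smul_comm]; exact Submodule.smul_mem _ _ ih
  | zero => simp only [zero_mul]; exact Submodule.zero_mem _
  | add x y hx hy ihx ihy => rw [add_mul]; exact Submodule.add_mem _ ihx ihy
  | smul a x hx ih => rw [smul_mul_assoc]; exact Submodule.smul_mem _ _ ih

lemma smul_mul_mem (Ω' : Matrix (Fin (k + 2)) (Fin k) R) (c : R)
    (hall : ∀ a b, c • (lin Ω' a * lin Ω' b) ∈ Submodule.span R (genSet Ω'))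
    (u u' : Finset (Fin (k + 2))) {f g : MvPolynomial (Fin k) R}
    (hf : f ∈ Submodule.span R {f | ∃ t, t ∈ u ∧ f = lin Ω' t})
    (hg : g ∈ Submodule.span R {f | ∃ t, t ∈ u' ∧ f = lin Ω' t}) :
    c • (f * g) ∈ Submodule.span R (genSet Ω') := by
  induction hf using Submodule.span_induction with
  | mem x hx =>
      obtain ⟨t, ht, rfl⟩ := hx
      induction hg using Submodule.span_induction with
      | mem y hy =>
          obtain ⟨t', ht', rfl⟩ := hy
          exact hall t t'
      | zero => simp only [mul_zero, smul_zero]; exact Submodule.zero_mem _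
      | add y z hy hz ihy ihz =>
          rw [mul_add, smul_add]; exact Submodule.add_mem _ ihy ihz
      | smul a y hy ih =>
          rw [mul_smul_comm, smul_comm]; exact Submodule.smul_mem _ _ ih
  | zero => simp only [zero_mul, smul_zero]; exact Submodule.zero_mem _
  | add x y hx hy ihx ihy => rw [add_mul, smul_add]; exact Submodule.add_mem _ ihx ihy
  | smul a x hx ih => rw [smul_mul_assoc, smul_comm]; exact Submodule.smul_mem _ _ ih

lemma card_compl_pair {p q : Fin (k + 2)} (h : p ≠ q) :
    ({p, q} : Finset (Fin (k + 2)))ᶜ.card = k := by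
  rw [Finset.card_compl, Finset.card_pair h]
  simp

lemma field_X_mem {F : Type*} [Field F] (Ω' : Matrix (Fin (k + 2)) (Fin k) F)
    {p q : Fin (k + 2)} (hpq : p ≠ q) (hd : minorDetR Ω' {p, q} ≠ 0) (i : Fin k) :
    (X i : MvPolynomial (Fin k) F) ∈
      Submodule.span F {f | ∃ t, t ∈ ({p, q} : Finset (Fin (k + 2)))ᶜ ∧ f = lin Ω' t} := by
  have h := card_compl_pair hpq
  have h1 := adj_smul_X Ω' {p, q} h i
  have hX : (X i : MvPolynomial (Fin k) F)
      = (minorDetR Ω' {p, q})⁻¹ • (minorDetR Ω' {p, q} • (X i : MvPolynomial (Fin k) F)) := by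
    rw [smul_smul, inv_mul_cancel₀ hd, one_smul]
  rw [hX]
  exact Submodule.smul_mem _ _ h1

lemma field_lin_mem {F : Type*} [Field F] (Ω' : Matrix (Fin (k + 2)) (Fin k) F)
    {p q : Fin (k + 2)} (hpq : p ≠ q) (hd : minorDetR Ω' {p, q} ≠ 0) (r : Fin (k + 2)) :
    lin Ω' r ∈
      Submodule.span F {f | ∃ t, t ∈ ({p, q} : Finset (Fin (k + 2)))ᶜ ∧ f = lin Ω' t} := by
  rw [lin]
  refine Submodule.sum_mem _ fun i _ => ?_
  rw [C_mul']
  exact Submodule.smul_mem _ _ (field_X_mem Ω' hpq hd i)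

lemma field_span {F : Type*} [Field F] (Ω' : Matrix (Fin (k + 2)) (Fin k) F)
    (hyp : ∀ p, ∃ q, q ≠ p ∧ minorDetR Ω' {p, q} ≠ 0) (i j : Fin k) :
    (X i * X j : MvPolynomial (Fin k) F) ∈ Submodule.span F (genSet Ω') := by
  have hsq : ∀ t, lin Ω' t * lin Ω' t ∈ Submodule.span F (genSet Ω') := by
    intro t
    obtain ⟨q, hq, hd⟩ := hyp t
    refine mul_lin_mem Ω' _ (field_lin_mem Ω' (Ne.symm hq) hd t) t ?_
    simp
  obtain ⟨q₀, hq₀, hd₀⟩ := hyp 0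
  exact mul_mem_of_sq Ω' hsq _ _ (field_X_mem Ω' (Ne.symm hq₀) hd₀ i)
    (field_X_mem Ω' (Ne.symm hq₀) hd₀ j)

lemma deg2 {σ : Type*} (d : σ →₀ ℕ) (hd : Finsupp.degree d = 2) :
    ∃ i j, d = Finsupp.single i 1 + Finsupp.single j 1 := by
  classical
  have hc : Multiset.card (Finsupp.toMultiset d) = 2 := by
    rw [Finsupp.card_toMultiset]
    rw [← hd]; rfl
  obtain ⟨i, j, hij⟩ := Multiset.card_eq_two.mp hc
  refine ⟨i, j, ?_⟩
  have heq : Finsupp.toMultiset d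
      = Finsupp.toMultiset (Finsupp.single i 1 + Finsupp.single j 1) := by
    rw [hij, Finsupp.toMultiset_add, Finsupp.toMultiset_single, Finsupp.toMultiset_single]
    simp [Multiset.insert_eq_cons]
  exact Multiset.toFinsupp.symm.injective heq

lemma mono2 {σ : Type*} (i j : σ) (c : R) :
    monomial (Finsupp.single i 1 + Finsupp.single j 1) c = c • (X i * X j : MvPolynomial σ R) := by
  simp [X, monomial_mul, smul_monomial]

lemma scale_mem (Ω' : Matrix (Fin (k + 2)) (Fin k) R) (c : R)
    (h : ∀ i j, c • (X i * X j : MvPolynomial (Fin k) R) ∈ Submodule.span R (genSet Ω'))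
    {f : MvPolynomial (Fin k) R} (hf : f.IsHomogeneous 2) :
    c • f ∈ Submodule.span R (genSet Ω') := by
  have hfs := support_sum_monomial_coeff f
  rw [← hfs, Finset.smul_sum]
  refine Submodule.sum_mem _ fun d hd => ?_
  have hdeg : Finsupp.degree d = 2 := by
    by_contra hne
    exact (mem_support_iff.mp hd) (hf.coeff_eq_zero hne)
  obtain ⟨i, j, rfl⟩ := deg2 d hdeg
  rw [mono2, smul_comm]
  exact Submodule.smul_mem _ _ (h i j)

end Aux

section IntSide

variable {k : ℕ}

lemma exist_scale (Ω : Matrix (Fin (k + 2)) (Fin k) ℤ) (hΩ : CondStar k Ω) :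
    ∃ n : ℕ, 0 < n ∧ ∀ i j : Fin k,
      (n : ℤ) • (X i * X j : MvPolynomial (Fin k) ℤ) ∈ Submodule.span ℤ (genSet Ω) := by
  classical
  have h01 : (0 : Fin (k + 2)) ≠ 1 := by simp [Fin.ext_iff]
  set qsel : Fin (k + 2) → Fin (k + 2) := fun t => if t = 0 then 1 else 0 with hqsel
  have hq : ∀ t, t ≠ qsel t := by
    intro t
    by_cases ht : t = 0
    · subst ht; simpa [hqsel] using h01
    · simpa [hqsel, ht] using ht
  have he : ∀ t, Delta k Ω t (qsel t) ≠ 0 := fun t => hΩ.1 t (qsel t) (hq t)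
  have hsq : ∀ t, Delta k Ω t (qsel t) • (lin Ω t * lin Ω t)
      ∈ Submodule.span ℤ (genSet Ω) := by
    intro t
    have hcard := card_compl_pair (hq t)
    have h1 : minorDetR Ω {t, qsel t} • lin Ω t ∈
        Submodule.span ℤ {f | ∃ u, u ∈ ({t, qsel t} : Finset (Fin (k + 2)))ᶜ ∧ f = lin Ω u} :=
      adj_smul_lin Ω {t, qsel t} hcard t
    have h2 := mul_lin_mem Ω _ h1 t (by simp)
    rw [smul_mul_assoc] at h2
    exact h2
  set E : ℕ := ∏ t : Fin (k + 2), (Delta k Ω t (qsel t)).natAbs with hE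
  have hEpos : 0 < E := by
    refine Finset.prod_pos fun t _ => ?_
    exact Nat.pos_of_ne_zero (fun h => he t (Int.natAbs_eq_zero.mp h))
  have hdvd : ∀ t, Delta k Ω t (qsel t) ∣ (E : ℤ) := by
    intro t
    refine dvd_trans (Int.dvd_natAbs.mpr dvd_rfl) ?_
    exact_mod_cast Int.natCast_dvd_natCast.mpr (Finset.dvd_prod_of_mem _ (Finset.mem_univ t))
  have hEsq : ∀ t, (E : ℤ) • (lin Ω t * lin Ω t) ∈ Submodule.span ℤ (genSet Ω) := by
    intro t
    obtain ⟨c, hc⟩ := hdvd t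
    rw [hc, mul_comm, mul_smul]
    exact Submodule.smul_mem _ _ (hsq t)
  have hall : ∀ a b, (E : ℤ) • (lin Ω a * lin Ω b) ∈ Submodule.span ℤ (genSet Ω) := by
    intro a b
    rcases eq_or_ne a b with rfl | hne
    · exact hEsq a
    · exact Submodule.smul_mem _ _ (Submodule.subset_span ⟨a, b, hne, rfl⟩)
  set Δ₀ : ℤ := Delta k Ω 0 1 with hΔ₀
  have hcard01 := card_compl_pair h01
  have hXmem : ∀ i : Fin k, Δ₀ • (X i : MvPolynomial (Fin k) ℤ) ∈
      Submodule.span ℤ {f | ∃ t, t ∈ ({0, 1} : Finset (Fin (k + 2)))ᶜ ∧ f = lin Ω t} :=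
    fun i => adj_smul_X Ω {0, 1} hcard01 i
  have hΔ₀ne : Δ₀ ≠ 0 := hΩ.1 0 1 h01
  have hΔ₀pos : 0 < Δ₀.natAbs := Nat.pos_of_ne_zero fun h => hΔ₀ne (Int.natAbs_eq_zero.mp h)
  refine ⟨E * (Δ₀.natAbs * Δ₀.natAbs), Nat.mul_pos hEpos (Nat.mul_pos hΔ₀pos hΔ₀pos),
    fun i j => ?_⟩
  have key : ((E * (Δ₀.natAbs * Δ₀.natAbs) : ℕ) : ℤ) • (X i * X j : MvPolynomial (Fin k) ℤ)
      = (E : ℤ) • ((Δ₀ • (X i : MvPolynomial (Fin k) ℤ)) * (Δ₀ • (X j : MvPolynomial (Fin k) ℤ))) := by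
    rw [smul_mul_smul_comm, smul_smul]
    congr 1
    push_cast
    rw [abs_mul_abs_self]
  rw [key]
  exact smul_mul_mem Ω _ hall _ _ (hXmem i) (hXmem j)

lemma mod_prime (ℓ : ℕ) (hp : ℓ.Prime) (Ω : Matrix (Fin (k + 2)) (Fin k) ℤ)
    (hΩ : CondStar k Ω) (i j : Fin k) :
    ∃ y ∈ Submodule.span ℤ (genSet Ω), ∃ g : MvPolynomial (Fin k) ℤ, g.IsHomogeneous 2 ∧
      (X i * X j : MvPolynomial (Fin k) ℤ) = y + (ℓ : ℤ) • g := by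
  classical
  haveI : Fact ℓ.Prime := ⟨hp⟩
  set φ : MvPolynomial (Fin k) ℤ →+* MvPolynomial (Fin k) (ZMod ℓ) :=
    (MvPolynomial.map (Int.castRingHom (ZMod ℓ))) with hφ
  set Ω' : Matrix (Fin (k + 2)) (Fin k) (ZMod ℓ) := Ω.map (Int.castRingHom (ZMod ℓ)) with hΩ'
  have hyp : ∀ p, ∃ q, q ≠ p ∧ minorDetR Ω' {p, q} ≠ 0 := by
    intro p
    by_contra hc
    push_neg at hc
    have hdvd : (ℓ : ℕ) ∣ (Finset.univ.erase p).gcd (fun q => (Delta k Ω p q).natAbs) := by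
      refine Finset.dvd_gcd fun q hqmem => ?_
      have hqp : q ≠ p := (Finset.mem_erase.mp hqmem).1
      have h0 : minorDetR Ω' {p, q} = 0 := hc q hqp
      rw [hΩ', minorDetR_map] at h0
      have hz : ((Delta k Ω p q : ℤ) : ZMod ℓ) = 0 := by
        rw [Delta_eq_minorDetR]; exact h0
      have : (ℓ : ℤ) ∣ Delta k Ω p q := (ZMod.intCast_zmod_eq_zero_iff_dvd _ _).mp hz
      simpa using Int.natAbs_dvd_natAbs.mpr this
    rw [hΩ.2 p] at hdvd
    exact hp.one_lt.ne' (Nat.dvd_one.mp hdvd)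
  have hmem := field_span Ω' hyp i j
  have hpre : ∀ x ∈ Submodule.span (ZMod ℓ) (genSet Ω'),
      ∃ y ∈ Submodule.span ℤ (genSet Ω), φ y = x := by
    intro x hx
    induction hx using Submodule.span_induction with
    | mem x hx =>
        obtain ⟨p, q, hpq, rfl⟩ := hx
        refine ⟨lin Ω p * lin Ω q, Submodule.subset_span ⟨p, q, hpq, rfl⟩, ?_⟩
        rw [map_mul]
        rw [hΩ', lin_map, lin_map]
    | zero => exact ⟨0, Submodule.zero_mem _, map_zero φ⟩
    | add x y hx hy ihx ihy =>
        obtain ⟨y₁, hy₁, hy₁x⟩ := ihx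
        obtain ⟨y₂, hy₂, hy₂x⟩ := ihy
        exact ⟨y₁ + y₂, Submodule.add_mem _ hy₁ hy₂, by rw [map_add, hy₁x, hy₂x]⟩
    | smul a x hx ih =>
        obtain ⟨y, hy, hyx⟩ := ih
        obtain ⟨z, rfl⟩ := ZMod.intCast_surjective a
        refine ⟨z • y, Submodule.smul_mem _ _ hy, ?_⟩
        rw [map_zsmul, hyx, Int.cast_smul_eq_zsmul]
  obtain ⟨y, hy, hyx⟩ := hpre _ hmem
  have hyhom : y.IsHomogeneous 2 := (span_genSet_le Ω) hy
  set e : MvPolynomial (Fin k) ℤ := X i * X j - y with hedef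
  have he0 : φ e = 0 := by
    rw [hedef, map_sub, hyx, hφ]
    simp
  have hdv : ∀ d, (ℓ : ℤ) ∣ coeff d e := by
    intro d
    have h1 : coeff d (φ e) = 0 := by rw [he0]; simp
    rw [hφ] at h1
    rw [coeff_map] at h1
    exact (ZMod.intCast_zmod_eq_zero_iff_dvd _ _).mp h1
  have hehom : e.IsHomogeneous 2 :=
    (((isHomogeneous_X ℤ i).mul (isHomogeneous_X ℤ j))).sub hyhom
  set g : MvPolynomial (Fin k) ℤ := ∑ d ∈ e.support, monomial d (coeff d e / ℓ) with hgdef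
  have hcoeffg : ∀ d, coeff d g = coeff d e / ℓ := by
    intro d
    rw [hgdef, coeff_sum]
    simp only [coeff_monomial]
    rw [Finset.sum_ite_eq' e.support d (fun x => coeff x e / (ℓ : ℤ))]
    split_ifs with hmem'
    · rfl
    · rw [notMem_support_iff.mp hmem']
      simp
  have hlg : (ℓ : ℤ) • g = e := by
    apply MvPolynomial.ext
    intro d
    rw [coeff_smul, hcoeffg, smul_eq_mul, Int.mul_ediv_cancel' (hdv d)]
  have hghom : g.IsHomogeneous 2 := by
    intro d hcd
    refine hehom ?_
    intro h0
    apply hcd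
    rw [hcoeffg, h0]
    simp
  exact ⟨y, hy, g, hghom, by rw [hlg, hedef]; ring⟩

lemma xij_mem (Ω : Matrix (Fin (k + 2)) (Fin k) ℤ) (hΩ : CondStar k Ω) :
    ∀ i j : Fin k, (X i * X j : MvPolynomial (Fin k) ℤ) ∈ Submodule.span ℤ (genSet Ω) := by
  obtain ⟨n, hn, hQ⟩ := exist_scale Ω hΩ
  have main : ∀ n : ℕ, 0 < n →
      (∀ i j : Fin k, (n : ℤ) • (X i * X j : MvPolynomial (Fin k) ℤ) ∈
        Submodule.span ℤ (genSet Ω)) →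
      ∀ i j : Fin k, (X i * X j : MvPolynomial (Fin k) ℤ) ∈ Submodule.span ℤ (genSet Ω) := by
    intro n
    induction n using Nat.strong_induction_on with
    | _ n ih =>
      intro hn hQn i j
      rcases eq_or_lt_of_le (show 1 ≤ n from hn) with h1 | h1
      · have := hQn i j
        rw [← h1] at this
        simpa using this
      · -- 1 < n
        set ℓ := n.minFac with hℓ
        have hℓp : ℓ.Prime := Nat.minFac_prime (by omega)
        obtain ⟨m, hm⟩ : ℓ ∣ n := Nat.minFac_dvd n
        have hmpos : 0 < m := by
          rcases Nat.eq_zero_or_pos m with h | h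
          · subst h; simp at hm; omega
          · exact h
        have hmlt : m < n := by
          have h2 : 2 ≤ ℓ := hℓp.two_le
          calc m < ℓ * m := by nlinarith
            _ = n := hm.symm
        have hQm : ∀ i j : Fin k, (m : ℤ) • (X i * X j : MvPolynomial (Fin k) ℤ) ∈
            Submodule.span ℤ (genSet Ω) := by
          intro i' j'
          obtain ⟨y, hy, g, hghom, hdecomp⟩ := mod_prime ℓ hℓp Ω hΩ i' j'
          rw [hdecomp, smul_add, smul_smul]
          refine Submodule.add_mem _ (Submodule.smul_mem _ _ hy) ?_
          have : ((m : ℤ) * (ℓ : ℤ)) = (n : ℤ) := by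
            rw [hm]; push_cast; ring
          rw [this]
          exact scale_mem Ω _ hQn hghom
        exact ih m hmlt hmpos hQm i j
  exact main n hn hQ

end IntSide

/-- The homogeneous degree-2 polynomials are spanned over `ℤ` by the products
`v_p · v_q` with `p ≠ q`. -/
theorem span_vp_vq_eq_homogeneous (k : ℕ) (hk : 2 ≤ k) (Ω : Matrix (Fin (k + 2)) (Fin k) ℤ)
    (hΩ : CondStar k Ω) :
    Submodule.span ℤ {f : MvPolynomial (Fin k) ℤ |
        ∃ p q : Fin (k + 2), p ≠ q ∧ f = vP k Ω p * vP k Ω q} =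
      MvPolynomial.homogeneousSubmodule (Fin k) ℤ 2 := by
  have hset : {f : MvPolynomial (Fin k) ℤ |
      ∃ p q : Fin (k + 2), p ≠ q ∧ f = vP k Ω p * vP k Ω q} = genSet Ω := by
    rfl
  rw [hset]
  refine le_antisymm (span_genSet_le Ω) ?_
  intro f hf
  have hfhom : f.IsHomogeneous 2 := (mem_homogeneousSubmodule _ _).mp hf
  have h1 : (1 : ℤ) • f ∈ Submodule.span ℤ (genSet Ω) := by
    refine scale_mem Ω 1 (fun i j => ?_) hfhom
    rw [one_smul]
    exact xij_mem Ω hΩ i j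
  simpa using h1
end

section
/- Suppose Ω satisfies Condition (*). In the polynomial ring ℤ[u_1,…,u_{k+2}], the ideal generated by the elements ρ_{abc} = ε^a_b·u_a·u_b + ε^b_c·u_b·u_c + ε^c_a·u_c·u_a (a,b,c ∈ {1,…,k+2} distinct) contains the elements u_p·u_q·u_r, ε^p_q·u_p²·u_q − ε^p_r·u_p²·u_r, and u_p²·u_q², for all distinct p,q,r ∈ {1,…,k+2}. -/
open Finset

/-- `ρ_{abc} = ε^a_b u_a u_b + ε^b_c u_b u_c + ε^c_a u_c u_a` in `ℤ[u_1,…,u_{k+2}]`. -/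
noncomputable def rho (k : ℕ) (Ω : Matrix (Fin (k + 2)) (Fin k) ℤ) (a b c : Fin (k + 2)) :
    MvPolynomial (Fin (k + 2)) ℤ :=
  MvPolynomial.C (eps k Ω a b) * MvPolynomial.X a * MvPolynomial.X b +
  MvPolynomial.C (eps k Ω b c) * MvPolynomial.X b * MvPolynomial.X c +
  MvPolynomial.C (eps k Ω c a) * MvPolynomial.X c * MvPolynomial.X a

/-- The ideal generated by the `ρ_{abc}` for `a, b, c` distinct. -/
noncomputable def rhoIdeal (k : ℕ) (Ω : Matrix (Fin (k + 2)) (Fin k) ℤ) :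
    Ideal (MvPolynomial (Fin (k + 2)) ℤ) :=
  Ideal.span {g | ∃ a b c : Fin (k + 2), a ≠ b ∧ b ≠ c ∧ a ≠ c ∧ g = rho k Ω a b c}

namespace RhoAux

open MvPolynomial Matrix

variable (k : ℕ) (Ω : Matrix (Fin (k + 2)) (Fin k) ℤ)

lemma sign_mul_self (z : ℤ) (hz : z ≠ 0) : z.sign * z.sign = 1 := by
  rcases hz.lt_or_gt with h | h
  · rw [Int.sign_eq_neg_one_iff_neg.mpr h]; norm_num
  · rw [Int.sign_eq_one_iff_pos.mpr h]; norm_num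

lemma sign_neg_one_pow (n : ℕ) : Int.sign ((-1) ^ n) = (-1) ^ n := by
  rcases Nat.even_or_odd n with h | h
  · rw [h.neg_one_pow]; rfl
  · rw [h.neg_one_pow]; rfl

lemma sign_idem (z : ℤ) : z.sign.sign = z.sign := by
  rcases lt_trichotomy z 0 with h | h | h
  · rw [Int.sign_eq_neg_one_iff_neg.mpr h]; rfl
  · rw [h]; rfl
  · rw [Int.sign_eq_one_iff_pos.mpr h]; rfl

lemma sign_disj (X Y Z : ℤ) (hX : X ≠ 0) (hY : Y ≠ 0) (hZ : Z ≠ 0)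
    (h : X - Y + Z = 0) : X.sign = Y.sign ∨ Y.sign = Z.sign := by
  rcases hX.lt_or_gt with hx | hx <;> rcases hY.lt_or_gt with hy | hy <;>
    rcases hZ.lt_or_gt with hz | hz
  · left; rw [Int.sign_eq_neg_one_iff_neg.mpr hx, Int.sign_eq_neg_one_iff_neg.mpr hy]
  · left; rw [Int.sign_eq_neg_one_iff_neg.mpr hx, Int.sign_eq_neg_one_iff_neg.mpr hy]
  · exfalso; omega
  · right; rw [Int.sign_eq_one_iff_pos.mpr hy, Int.sign_eq_one_iff_pos.mpr hz]
  · right; rw [Int.sign_eq_neg_one_iff_neg.mpr hy, Int.sign_eq_neg_one_iff_neg.mpr hz]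
  · exfalso; omega
  · left; rw [Int.sign_eq_one_iff_pos.mpr hx, Int.sign_eq_one_iff_pos.mpr hy]
  · left; rw [Int.sign_eq_one_iff_pos.mpr hx, Int.sign_eq_one_iff_pos.mpr hy]

lemma eps_antisymm (x y : Fin (k + 2)) : eps k Ω y x = - eps k Ω x y := by
  unfold eps
  rw [Delta_symm k Ω y x, show ((y : ℤ) - (x : ℤ)) = -((x : ℤ) - (y : ℤ)) by ring,
    Int.sign_neg, Nat.add_comm (y : ℕ) (x : ℕ)]
  ring

lemma eps_sq (x y : Fin (k + 2)) (hxy : x ≠ y) (hΔ : Delta k Ω x y ≠ 0) :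
    eps k Ω x y * eps k Ω x y = 1 := by
  have hxyZ : ((x : ℤ) - (y : ℤ)) ≠ 0 := by
    intro h
    apply hxy
    have : (x : ℤ) = (y : ℤ) := by omega
    exact Fin.ext (by exact_mod_cast this)
  unfold eps
  have h1 : ((-1 : ℤ) ^ ((x : ℕ) + (y : ℕ))) * ((-1 : ℤ) ^ ((x : ℕ) + (y : ℕ))) = 1 := by
    rw [← pow_add, ← two_mul, pow_mul]; norm_num
  have h2 := sign_mul_self _ hxyZ
  have h3 := sign_mul_self _ hΔ
  calc (-1 : ℤ) ^ ((x : ℕ) + (y : ℕ)) * Int.sign ((x : ℤ) - (y : ℤ)) * Int.sign (Delta k Ω x y) *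
        ((-1) ^ ((x : ℕ) + (y : ℕ)) * Int.sign ((x : ℤ) - (y : ℤ)) * Int.sign (Delta k Ω x y))
      = ((-1 : ℤ) ^ ((x : ℕ) + (y : ℕ)) * (-1) ^ ((x : ℕ) + (y : ℕ))) *
        ((Int.sign ((x : ℤ) - (y : ℤ)) * Int.sign ((x : ℤ) - (y : ℤ))) *
         (Int.sign (Delta k Ω x y) * Int.sign (Delta k Ω x y))) := by ring
    _ = 1 := by rw [h1, h2, h3]; norm_num

/-- The antisymmetric matrix of signed minors. -/
noncomputable def Kmat (x y : Fin (k + 2)) : ℤ :=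
  (-1) ^ ((x : ℕ) + (y : ℕ)) * Int.sign ((y : ℤ) - (x : ℤ)) * Delta k Ω x y

lemma Kmat_diag (x : Fin (k + 2)) : Kmat k Ω x x = 0 := by
  unfold Kmat
  rw [sub_self, Int.sign_zero]
  ring

lemma Kmat_antisymm (x y : Fin (k + 2)) : Kmat k Ω y x = - Kmat k Ω x y := by
  unfold Kmat
  rw [Delta_symm k Ω y x, show ((x : ℤ) - (y : ℤ)) = -((y : ℤ) - (x : ℤ)) by ring,
    Int.sign_neg, Nat.add_comm (y : ℕ) (x : ℕ)]
  ring

lemma eps_eq_neg_sign_Kmat (x y : Fin (k + 2)) :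
    eps k Ω x y = - (Kmat k Ω x y).sign := by
  unfold eps Kmat
  rw [Int.sign_mul, Int.sign_mul, sign_neg_one_pow, sign_idem,
    show ((x : ℤ) - (y : ℤ)) = -((y : ℤ) - (x : ℤ)) by ring, Int.sign_neg]
  ring

lemma Kmat_ne_zero (x y : Fin (k + 2)) (hxy : x ≠ y) (hΔ : Delta k Ω x y ≠ 0) :
    Kmat k Ω x y ≠ 0 := by
  unfold Kmat
  have h1 : ((-1 : ℤ) ^ ((x : ℕ) + (y : ℕ))) ≠ 0 := pow_ne_zero _ (by norm_num)
  have h2 : Int.sign ((y : ℤ) - (x : ℤ)) ≠ 0 := by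
    rw [ne_eq, Int.sign_eq_zero_iff_zero]
    intro h
    apply hxy
    have : (x : ℤ) = (y : ℤ) := by omega
    exact Fin.ext (by exact_mod_cast this)
  exact mul_ne_zero (mul_ne_zero h1 h2) hΔ

lemma pair_compl_card (x y : Fin (k + 2)) (hxy : x ≠ y) :
    ({x, y} : Finset (Fin (k + 2)))ᶜ.card = k := by
  rw [Finset.card_compl, Finset.card_insert_of_notMem (by simp [hxy]), Finset.card_singleton]
  simp

lemma delta_eq_det_succAbove (x : Fin (k + 2)) (r : Fin (k + 1)) :
    Delta k Ω x (x.succAbove r) =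
      (Ω.submatrix (fun t => x.succAbove (r.succAbove t)) id).det := by
  have hxy : x ≠ x.succAbove r := (Fin.succAbove_ne x r).symm
  have hcard := pair_compl_card k x (x.succAbove r) hxy
  have hmem : ∀ t : Fin k,
      x.succAbove (r.succAbove t) ∈ ({x, x.succAbove r} : Finset (Fin (k + 2)))ᶜ := by
    intro t
    simp only [Finset.mem_compl, Finset.mem_insert, Finset.mem_singleton]
    push_neg
    refine ⟨Fin.succAbove_ne x _, fun h => ?_⟩
    exact Fin.succAbove_ne r t (Fin.succAbove_right_injective h)
  have hmono : StrictMono (fun t => x.succAbove (r.succAbove t)) :=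
    (Fin.strictMono_succAbove x).comp (Fin.strictMono_succAbove r)
  have hemb := Finset.orderEmbOfFin_unique hcard hmem hmono
  rw [Delta, minorDet, dif_pos hcard, ← hemb]

lemma Kmat_succAbove (x : Fin (k + 2)) (r : Fin (k + 1)) :
    Kmat k Ω x (x.succAbove r) =
      -((-1) ^ ((x : ℕ) + (r : ℕ)) * Delta k Ω x (x.succAbove r)) := by
  unfold Kmat
  rcases lt_or_ge (Fin.castSucc r) x with h | h
  · have hv : ((x.succAbove r : Fin (k + 2)) : ℕ) = (r : ℕ) := by
      rw [Fin.succAbove_of_castSucc_lt _ _ h]; exact Fin.coe_castSucc r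
    have hlt : ((x.succAbove r : Fin (k + 2)) : ℕ) < (x : ℕ) := by
      rw [hv]; exact_mod_cast h
    have hs : Int.sign (((x.succAbove r : Fin (k + 2)) : ℤ) - (x : ℤ)) = -1 := by
      apply Int.sign_eq_neg_one_iff_neg.mpr
      have : (((x.succAbove r : Fin (k + 2)) : ℕ) : ℤ) < ((x : ℕ) : ℤ) := by exact_mod_cast hlt
      push_cast at this ⊢
      omega
    rw [hs, hv]
    ring
  · have hv : ((x.succAbove r : Fin (k + 2)) : ℕ) = (r : ℕ) + 1 := by
      rw [Fin.succAbove_of_le_castSucc _ _ h]; exact Fin.val_succ r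
    have hlt : (x : ℕ) < ((x.succAbove r : Fin (k + 2)) : ℕ) := by
      rw [hv]
      have := h
      rw [Fin.le_def] at this
      simp only [Fin.coe_castSucc] at this
      omega
    have hs : Int.sign (((x.succAbove r : Fin (k + 2)) : ℤ) - (x : ℤ)) = 1 := by
      apply Int.sign_eq_one_iff_pos.mpr
      have : ((x : ℕ) : ℤ) < (((x.succAbove r : Fin (k + 2)) : ℕ) : ℤ) := by exact_mod_cast hlt
      push_cast at this ⊢
      omega
    rw [hs, hv, show (x : ℕ) + ((r : ℕ) + 1) = ((x : ℕ) + (r : ℕ)) + 1 by ring, pow_succ]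
    ring

lemma Kmat_row_ker (x : Fin (k + 2)) (i : Fin k) :
    ∑ y : Fin (k + 2), Kmat k Ω x y * Ω y i = 0 := by
  classical
  set B : Matrix (Fin (k + 1)) (Fin (k + 1)) ℤ :=
    Ω.submatrix x.succAbove (Fin.cases i (fun c => c)) with hB
  have hdup : B.det = 0 := by
    apply Matrix.det_zero_of_column_eq (show (0 : Fin (k + 1)) ≠ Fin.succ i
      from (Fin.succ_ne_zero i).symm)
    intro t
    simp [hB, Matrix.submatrix_apply]
  have hexp := Matrix.det_succ_column_zero B
  have hminor : ∀ r : Fin (k + 1),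
      (B.submatrix r.succAbove Fin.succ).det = Delta k Ω x (x.succAbove r) := by
    intro r
    have hBs : B.submatrix r.succAbove Fin.succ =
        Ω.submatrix (fun t => x.succAbove (r.succAbove t)) id := by
      ext t c
      simp [hB, Matrix.submatrix_apply]
    rw [hBs, delta_eq_det_succAbove]
  have hsum := Fin.sum_univ_succAbove (fun y => Kmat k Ω x y * Ω y i) x
  rw [hsum, Kmat_diag, zero_mul, zero_add]
  have hterm : ∀ r : Fin (k + 1),
      Kmat k Ω x (x.succAbove r) * Ω (x.succAbove r) i =
        (-(-1) ^ (x : ℕ)) * ((-1) ^ (r : ℕ) * B r 0 * (B.submatrix r.succAbove Fin.succ).det) := by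
    intro r
    rw [Kmat_succAbove, hminor]
    have hB0 : B r 0 = Ω (x.succAbove r) i := by simp [hB, Matrix.submatrix_apply]
    rw [hB0, pow_add]
    ring
  calc ∑ r : Fin (k + 1), Kmat k Ω x (x.succAbove r) * Ω (x.succAbove r) i
      = ∑ r : Fin (k + 1),
        (-(-1) ^ (x : ℕ)) * ((-1) ^ (r : ℕ) * B r 0 * (B.submatrix r.succAbove Fin.succ).det) := by
        exact Finset.sum_congr rfl fun r _ => hterm r
    _ = (-(-1) ^ (x : ℕ)) *
        ∑ r : Fin (k + 1), (-1) ^ (r : ℕ) * B r 0 * (B.submatrix r.succAbove Fin.succ).det := by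
        rw [Finset.mul_sum]
    _ = (-(-1) ^ (x : ℕ)) * B.det := by rw [← hexp]
    _ = 0 := by rw [hdup, mul_zero]

lemma det4 {F : Type*} [CommRing F] (P Q R S T U : F) :
    Matrix.det !![0,P,Q,R; -P,0,S,T; -Q,-S,0,U; -R,-T,-U,0] = (P*U - Q*T + R*S)^2 := by
  rw [Matrix.det_succ_row_zero]
  simp [Fin.sum_univ_succ, Matrix.det_fin_three,
    show ((1:Fin 4).succAbove 2) = 3 from rfl, show ((2:Fin 4).succAbove 2) = 3 from rfl,
    show ((1:Fin 4).succAbove 1) = 2 from rfl, show ((2:Fin 4).succAbove 1) = 1 from rfl,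
    show ((3:Fin 4).succAbove 2) = 2 from rfl, show ((3:Fin 4).succAbove 1) = 1 from rfl,
    show ((0:Fin 4).succAbove 2) = 3 from rfl, show (Fin.castSucc 2 : Fin 4) = 2 from rfl]
  ring

lemma Kmat_plucker (a b c d : Fin (k + 2)) (hcd : c ≠ d) (hne : Delta k Ω c d ≠ 0) :
    Kmat k Ω a b * Kmat k Ω c d - Kmat k Ω a c * Kmat k Ω b d
      + Kmat k Ω a d * Kmat k Ω b c = 0 := by
  classical
  set Kq : Matrix (Fin (k+2)) (Fin (k+2)) ℚ :=
    fun x y => ((Kmat k Ω x y : ℤ) : ℚ) with hKq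
  set Aq : Matrix (Fin (k+2)) (Fin k) ℚ := fun x i => ((Ω x i : ℤ) : ℚ) with hAq
  have hker : ∀ x : Fin (k+2), Kq x ∈ LinearMap.ker Aq.vecMulLinear := by
    intro x
    rw [LinearMap.mem_ker, Matrix.vecMulLinear_apply]
    funext i
    have h0 := Kmat_row_ker k Ω x i
    have h1 : ((∑ y, Kmat k Ω x y * Ω y i : ℤ) : ℚ) = ∑ y, Kq x y * Aq y i := by
      push_cast [hKq, hAq]
      rfl
    have h2 : (Kq x ᵥ* Aq) i = ∑ y, Kq x y * Aq y i := by
      simp [Matrix.vecMul, dotProduct]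
    rw [h2, ← h1, h0]
    simp
  -- the complement embedding for the pair {c, d}
  have hcard := pair_compl_card k c d hcd
  set e := (({c, d} : Finset (Fin (k+2)))ᶜ).orderEmbOfFin hcard with he
  have himg : Finset.image (fun j => e j) Finset.univ = ({c,d} : Finset (Fin (k+2)))ᶜ := by
    apply Finset.eq_of_subset_of_card_le
    · intro y hy
      simp only [Finset.mem_image] at hy
      obtain ⟨j, _, rfl⟩ := hy
      exact Finset.orderEmbOfFin_mem _ hcard j
    · rw [Finset.card_image_of_injective _ (e.injective), hcard, Finset.card_univ,
        Fintype.card_fin]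
  -- injectivity of the projection from the kernel to the coordinates c, d
  have hfr : Module.finrank ℚ (LinearMap.ker Aq.vecMulLinear) ≤ 2 := by
    set ψ := (LinearMap.funLeft ℚ ℚ (![c,d] : Fin 2 → Fin (k+2))).comp
      (LinearMap.ker Aq.vecMulLinear).subtype with hψ
    have hinj : Function.Injective ψ := by
      rw [← LinearMap.ker_eq_bot]
      apply LinearMap.ker_eq_bot'.mpr
      rintro ⟨u, hu⟩ h0
      have huc : u c = 0 := by
        have := congrFun h0 0
        simpa [hψ, LinearMap.funLeft] using this
      have hud : u d = 0 := by
        have := congrFun h0 1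
        simpa [hψ, LinearMap.funLeft] using this
      set S : Matrix (Fin k) (Fin k) ℚ := Aq.submatrix (fun j => e j) id with hS
      have hdetS : S.det ≠ 0 := by
        have hSmap : S = ((Ω.submatrix (fun j => e j) id).map (Int.castRingHom ℚ)) := by
          ext x y
          simp [hS, hAq, Matrix.map_apply]
          rfl
        rw [hSmap, ← RingHom.mapMatrix_apply (Int.castRingHom ℚ), ← RingHom.map_det]
        rw [show (Ω.submatrix (fun j => e j) id).det = Delta k Ω c d from by
          rw [Delta, minorDet, dif_pos hcard]]
        exact Int.cast_ne_zero.mpr hne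
      set w : Fin k → ℚ := fun j => u (e j) with hw
      have hu' : ∀ i, ∑ y, u y * Aq y i = 0 := by
        intro i
        have := congrFun (LinearMap.mem_ker.mp hu) i
        rw [Matrix.vecMulLinear_apply] at this
        simpa [Matrix.vecMul, dotProduct] using this
      have hwS : w ᵥ* S = 0 := by
        funext i
        have hsplit : ∑ y ∈ ({c,d} : Finset (Fin (k+2)))ᶜ, u y * Aq y i
            = ∑ y : Fin (k+2), u y * Aq y i := by
          apply Finset.sum_subset (Finset.subset_univ _)
          intro y _ hy
          have hy' : y = c ∨ y = d := by
            have := hy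
            simp only [Finset.mem_compl, Finset.mem_insert, Finset.mem_singleton,
              not_not, not_forall] at this
            tauto
          rcases hy' with rfl | rfl <;> simp [huc, hud]
        have himg2 : ∑ y ∈ Finset.image (fun j => e j) Finset.univ, u y * Aq y i
            = ∑ j, u (e j) * Aq (e j) i :=
          Finset.sum_image (fun x _ y _ h => e.injective h)
        calc (w ᵥ* S) i = ∑ j, u (e j) * Aq (e j) i := by
              simp [Matrix.vecMul, dotProduct, hw, hS]
          _ = ∑ y ∈ Finset.image (fun j => e j) Finset.univ, u y * Aq y i := himg2.symm
          _ = 0 := by rw [himg, hsplit, hu' i]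
      have hw0 : w = 0 := by
        by_contra hw0
        exact hdetS (Matrix.exists_vecMul_eq_zero_iff.mp ⟨w, hw0, hwS⟩)
      apply Subtype.ext
      funext y
      show u y = 0
      by_cases hyc : y = c
      · rw [hyc]; exact huc
      by_cases hyd : y = d
      · rw [hyd]; exact hud
      have hy : y ∈ Finset.image (fun j => e j) Finset.univ := by
        rw [himg]
        simp [Finset.mem_compl, Finset.mem_insert, hyc, hyd]
      obtain ⟨j, _, rfl⟩ := Finset.mem_image.mp hy
      exact congrFun hw0 j
    have := LinearMap.finrank_le_finrank_of_injective hinj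
    simpa [Module.finrank_pi] using this
  -- three kernel vectors are linearly dependent
  set vv : Fin 3 → LinearMap.ker Aq.vecMulLinear :=
    ![⟨Kq a, hker a⟩, ⟨Kq b, hker b⟩, ⟨Kq c, hker c⟩] with hvv
  have hnli : ¬ LinearIndependent ℚ vv := by
    intro hli
    have h3 := hli.fintype_card_le_finrank
    rw [Fintype.card_fin] at h3
    omega
  obtain ⟨g, hg, j0, hj0⟩ := Fintype.not_linearIndependent_iff.mp hnli
  have hcomb : g 0 • Kq a + g 1 • Kq b + g 2 • Kq c = 0 := by
    have := congrArg (Subtype.val) hg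
    simpa [hvv, Fin.sum_univ_three] using this
  set m : Fin 4 → Fin (k+2) := ![a,b,c,d] with hm
  set L : Matrix (Fin 4) (Fin 4) ℚ := Kq.submatrix m m with hL
  have hvm : (![g 0, g 1, g 2, 0] : Fin 4 → ℚ) ᵥ* L = 0 := by
    funext j'
    have hcf := congrFun hcomb (m j')
    simp only [Pi.add_apply, Pi.smul_apply, smul_eq_mul, Pi.zero_apply] at hcf
    simp only [Matrix.vecMul, dotProduct, Fin.sum_univ_four, hL, hm,
      Matrix.submatrix_apply, Pi.zero_apply]
    simp only [Matrix.cons_val_zero, Matrix.cons_val_one, Matrix.head_cons,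
      Matrix.cons_val_two, Matrix.tail_cons, Matrix.cons_val_three]
    linarith [hcf]
  have hv0 : (![g 0, g 1, g 2, 0] : Fin 4 → ℚ) ≠ 0 := by
    intro h0
    apply hj0
    fin_cases j0
    · simpa using congrFun h0 0
    · simpa using congrFun h0 1
    · simpa using congrFun h0 2
  have hdetL : L.det = 0 := Matrix.exists_vecMul_eq_zero_iff.mp ⟨_, hv0, hvm⟩
  have hdiag : ∀ x, Kq x x = 0 := fun x => by
    simp [hKq, Kmat_diag]
  have hanti : ∀ x y, Kq y x = - Kq x y := fun x y => by
    simp only [hKq]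
    rw [Kmat_antisymm]
    push_cast
    ring
  have hLform : L = !![0, L 0 1, L 0 2, L 0 3;
      -(L 0 1), 0, L 1 2, L 1 3;
      -(L 0 2), -(L 1 2), 0, L 2 3;
      -(L 0 3), -(L 1 3), -(L 2 3), 0] := by
    ext i j
    fin_cases i <;> fin_cases j <;>
      simp [hL, hm, Matrix.submatrix_apply] <;>
      first
        | exact hdiag _
        | exact hanti _ _
  have hPf : (L 0 1 * L 2 3 - L 0 2 * L 1 3 + L 0 3 * L 1 2)^2 = 0 := by
    calc (L 0 1 * L 2 3 - L 0 2 * L 1 3 + L 0 3 * L 1 2)^2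
        = Matrix.det !![0, L 0 1, L 0 2, L 0 3;
            -(L 0 1), 0, L 1 2, L 1 3;
            -(L 0 2), -(L 1 2), 0, L 2 3;
            -(L 0 3), -(L 1 3), -(L 2 3), 0] := (det4 _ _ _ _ _ _).symm
      _ = L.det := by rw [← hLform]
      _ = 0 := hdetL
  have hPf0 : L 0 1 * L 2 3 - L 0 2 * L 1 3 + L 0 3 * L 1 2 = 0 := by
    exact pow_eq_zero_iff (two_ne_zero) |>.mp hPf
  have hLab : L 0 1 = ((Kmat k Ω a b : ℤ) : ℚ) := by simp [hL, hm, hKq, Matrix.submatrix_apply]; rfl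
  have hLcd : L 2 3 = ((Kmat k Ω c d : ℤ) : ℚ) := by simp [hL, hm, hKq, Matrix.submatrix_apply]; rfl
  have hLac : L 0 2 = ((Kmat k Ω a c : ℤ) : ℚ) := by simp [hL, hm, hKq, Matrix.submatrix_apply]; rfl
  have hLbd : L 1 3 = ((Kmat k Ω b d : ℤ) : ℚ) := by simp [hL, hm, hKq, Matrix.submatrix_apply]; rfl
  have hLad : L 0 3 = ((Kmat k Ω a d : ℤ) : ℚ) := by simp [hL, hm, hKq, Matrix.submatrix_apply]; rfl
  have hLbc : L 1 2 = ((Kmat k Ω b c : ℤ) : ℚ) := by simp [hL, hm, hKq, Matrix.submatrix_apply]; rfl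
  rw [hLab, hLcd, hLac, hLbd, hLad, hLbc] at hPf0
  exact_mod_cast hPf0

lemma eps_pattern (hΩ : CondStar k Ω) (a b c d : Fin (k + 2))
    (hab : a ≠ b) (hac : a ≠ c) (had : a ≠ d) (hbc : b ≠ c) (hbd : b ≠ d) (hcd : c ≠ d) :
    eps k Ω a b * eps k Ω c d = eps k Ω a c * eps k Ω b d ∨
      eps k Ω a c * eps k Ω b d = eps k Ω a d * eps k Ω b c := by
  have hP := Kmat_plucker k Ω a b c d hcd (hΩ.1 c d hcd)
  have nab := Kmat_ne_zero k Ω a b hab (hΩ.1 a b hab)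
  have nac := Kmat_ne_zero k Ω a c hac (hΩ.1 a c hac)
  have nad := Kmat_ne_zero k Ω a d had (hΩ.1 a d had)
  have nbc := Kmat_ne_zero k Ω b c hbc (hΩ.1 b c hbc)
  have nbd := Kmat_ne_zero k Ω b d hbd (hΩ.1 b d hbd)
  have ncd := Kmat_ne_zero k Ω c d hcd (hΩ.1 c d hcd)
  have hdisj := sign_disj (Kmat k Ω a b * Kmat k Ω c d) (Kmat k Ω a c * Kmat k Ω b d)
    (Kmat k Ω a d * Kmat k Ω b c) (mul_ne_zero nab ncd) (mul_ne_zero nac nbd)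
    (mul_ne_zero nad nbc) hP
  have e1 : eps k Ω a b * eps k Ω c d = (Kmat k Ω a b * Kmat k Ω c d).sign := by
    rw [eps_eq_neg_sign_Kmat, eps_eq_neg_sign_Kmat, Int.sign_mul]
    ring
  have e2 : eps k Ω a c * eps k Ω b d = (Kmat k Ω a c * Kmat k Ω b d).sign := by
    rw [eps_eq_neg_sign_Kmat, eps_eq_neg_sign_Kmat, Int.sign_mul]
    ring
  have e3 : eps k Ω a d * eps k Ω b c = (Kmat k Ω a d * Kmat k Ω b c).sign := by
    rw [eps_eq_neg_sign_Kmat, eps_eq_neg_sign_Kmat, Int.sign_mul]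
    ring
  rcases hdisj with h | h
  · left; rw [e1, e2, h]
  · right; rw [e2, e3, h]

lemma quad {A : Type*} [CommRing A] (eab eac ead ebc ebd ecd Ua Ub Uc Ud : A)
    (sab : eab*eab = 1) (sac : eac*eac = 1) (sad : ead*ead = 1)
    (sbc : ebc*ebc = 1) (sbd : ebd*ebd = 1) (scd : ecd*ecd = 1)
    (habc : eab*(Ua*Ub) + ebc*(Ub*Uc) - eac*(Uc*Ua) = 0)
    (habd : eab*(Ua*Ub) + ebd*(Ub*Ud) - ead*(Ud*Ua) = 0)
    (hacd : eac*(Ua*Uc) + ecd*(Uc*Ud) - ead*(Ud*Ua) = 0)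
    (hbcd : ebc*(Ub*Uc) + ecd*(Uc*Ud) - ebd*(Ud*Ub) = 0)
    (ht : eab*ecd = eac*ebd ∨ eac*ebd = ead*ebc) :
    Ua*Ub*Uc = 0 := by
  rcases ht with ht | ht
  · have E1 : eab*ead*(Ua*Ub*Ud) - eac*ead*(Ua*Uc*Ud) = 0 := by
      linear_combination (eac*Uc)*habd - (eab*Ub)*hacd + (Ub*Uc*Ud)*ht
    have E2 : Ua*Uc*Ud - eab*eac*(Ua*Ub*Ud) = 0 := by
      linear_combination (-(eac*ead))*E1 + (-(ead*ead*(Ua*Uc*Ud)))*sac +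
        (-(Ua*Uc*Ud) + eab*eac*(Ua*Ub*Ud))*sad
    have E3 : ebc*(Ub*Uc*Ud) = 0 := by
      linear_combination Ud*habc + eac*E2 + (eab*(Ua*Ub*Ud))*sac
    have E4 : Ub*Uc*Ud = 0 := by
      linear_combination ebc*E3 + (-(Ub*Uc*Ud))*sbc
    have E5 : Ua*Ub*Uc - eac*ead*(Ua*Ub*Ud) = 0 := by
      linear_combination (eac*Ub)*hacd - (eac*ecd)*E4 + (-(Ua*Ub*Uc))*sac
    have H2 : (ebc*(eac*ead) + ecd*(eab*eac) - ebd)*(Ua*Ub*Ud) = 0 := by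
      linear_combination Ua*hbcd - ebc*E5 - ecd*E2
    have H3 : ebc*ebd*eac*ead*(Ua*Ub*Ud) = 0 := by
      linear_combination ebd*H2 - (eac*ebd*(Ua*Ub*Ud))*ht + (-(ebd*ebd*(Ua*Ub*Ud)))*sac
    have H4 : Ua*Ub*Ud = 0 := by
      linear_combination (ebc*ebd*eac*ead)*H3 + (-(ead*ead*ebc*ebc*ebd*ebd*(Ua*Ub*Ud)))*sac +
        (-(ebc*ebc*ebd*ebd*(Ua*Ub*Ud)))*sad + (-(ebd*ebd*(Ua*Ub*Ud)))*sbc +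
        (-(Ua*Ub*Ud))*sbd
    linear_combination E5 + (eac*ead)*H4
  · have F1 : ebc*ecd*(Ub*Uc*Ud) - eac*ecd*(Ua*Uc*Ud) = 0 := by
      linear_combination (ebc*Ub)*hacd - (eac*Ua)*hbcd - (Ua*Ub*Ud)*ht
    have F2 : Ub*Uc*Ud - ebc*eac*(Ua*Uc*Ud) = 0 := by
      linear_combination (ebc*ecd)*F1 + (-(ecd*ecd*(Ub*Uc*Ud)))*sbc +
        (-(Ub*Uc*Ud) + eac*ebc*(Ua*Uc*Ud))*scd
    have F3 : eab*(Ua*Ub*Ud) = 0 := by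
      linear_combination Ud*habc - ebc*F2 + (-(eac*(Ua*Uc*Ud)))*sbc
    have F4 : Ua*Ub*Ud = 0 := by
      linear_combination eab*F3 + (-(Ua*Ub*Ud))*sab
    have G1 : ebc*(Ua*Ub*Uc) + ecd*(Ua*Uc*Ud) = 0 := by
      linear_combination Ua*hbcd + ebd*F4
    have G2 : Ua*Uc*Ud + ebc*ecd*(Ua*Ub*Uc) = 0 := by
      linear_combination ecd*G1 + (-(Ua*Uc*Ud))*scd
    have G3 : eab*(Ua*Ub*Uc) = 0 := by
      linear_combination Uc*habd - ebd*F2 - (ebd*(ebc*eac) - ead)*G2 +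
        (eac*ebd*ecd*(Ua*Ub*Uc))*sbc + (ecd*(Ua*Ub*Uc))*ht
    linear_combination eab*G3 + (-(Ua*Ub*Uc))*sab

end RhoAux


set_option maxHeartbeats 1000000 in
/-- The ideal generated by the `ρ_{abc}` contains `u_p u_q u_r`,
`ε^p_q u_p² u_q - ε^p_r u_p² u_r`, and `u_p² u_q²`, for all distinct `p, q, r`. -/
theorem rhoIdeal_contains (k : ℕ) (hk : 2 ≤ k) (Ω : Matrix (Fin (k + 2)) (Fin k) ℤ)
    (hΩ : CondStar k Ω) (p q r : Fin (k + 2)) (hpq : p ≠ q) (hqr : q ≠ r) (hpr : p ≠ r) :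
    (MvPolynomial.X p * MvPolynomial.X q * MvPolynomial.X r ∈ rhoIdeal k Ω) ∧
    (MvPolynomial.C (eps k Ω p q) * (MvPolynomial.X p) ^ 2 * MvPolynomial.X q -
      MvPolynomial.C (eps k Ω p r) * (MvPolynomial.X p) ^ 2 * MvPolynomial.X r
        ∈ rhoIdeal k Ω) ∧
    ((MvPolynomial.X p) ^ 2 * (MvPolynomial.X q) ^ 2 ∈ rhoIdeal k Ω) := by
  classical
  open MvPolynomial in
  obtain ⟨s, hsp, hsq, hsr⟩ : ∃ s : Fin (k + 2), s ≠ p ∧ s ≠ q ∧ s ≠ r := by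
    have h3 : ({p, q, r} : Finset (Fin (k + 2))).card ≤ 3 := by
      apply le_trans (Finset.card_insert_le _ _)
      have := Finset.card_insert_le q ({r} : Finset (Fin (k + 2)))
      simp only [Finset.card_singleton] at this
      omega
    have hne : (({p, q, r} : Finset (Fin (k + 2)))ᶜ).Nonempty := by
      rw [← Finset.card_pos, Finset.card_compl, Fintype.card_fin]
      omega
    obtain ⟨s, hs⟩ := hne
    simp only [Finset.mem_compl, Finset.mem_insert, Finset.mem_singleton] at hs
    push_neg at hs
    exact ⟨s, hs.1, hs.2.1, hs.2.2⟩
  have hps : p ≠ s := Ne.symm hsp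
  have hqs : q ≠ s := Ne.symm hsq
  have hrs : r ≠ s := Ne.symm hsr
  set π := Ideal.Quotient.mk (rhoIdeal k Ω) with hπ
  have hrho : ∀ a b c : Fin (k + 2), a ≠ b → b ≠ c → a ≠ c →
      π (MvPolynomial.C (eps k Ω a b)) * π (MvPolynomial.X a) * π (MvPolynomial.X b) +
      π (MvPolynomial.C (eps k Ω b c)) * π (MvPolynomial.X b) * π (MvPolynomial.X c) +
      π (MvPolynomial.C (eps k Ω c a)) * π (MvPolynomial.X c) * π (MvPolynomial.X a) = 0 := by
    intro a b c h1 h2 h3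
    have hmem : rho k Ω a b c ∈ rhoIdeal k Ω :=
      Ideal.subset_span ⟨a, b, c, h1, h2, h3, rfl⟩
    have h0 := Ideal.Quotient.eq_zero_iff_mem.mpr hmem
    rw [rho] at h0
    simpa [map_add, map_mul] using h0
  have sq : ∀ x y : Fin (k + 2), x ≠ y →
      π (MvPolynomial.C (eps k Ω x y)) * π (MvPolynomial.C (eps k Ω x y)) = 1 := by
    intro x y hxy
    rw [← map_mul, ← MvPolynomial.C_mul, RhoAux.eps_sq k Ω x y hxy (hΩ.1 x y hxy),
      MvPolynomial.C_1, map_one]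
  have asym : ∀ x y : Fin (k + 2),
      π (MvPolynomial.C (eps k Ω y x)) = - π (MvPolynomial.C (eps k Ω x y)) := by
    intro x y
    rw [RhoAux.eps_antisymm k Ω x y, map_neg, map_neg]
  have hrel : ∀ a b c : Fin (k + 2), a ≠ b → b ≠ c → a ≠ c →
      π (MvPolynomial.C (eps k Ω a b)) * (π (MvPolynomial.X a) * π (MvPolynomial.X b)) +
      π (MvPolynomial.C (eps k Ω b c)) * (π (MvPolynomial.X b) * π (MvPolynomial.X c)) -
      π (MvPolynomial.C (eps k Ω a c)) * (π (MvPolynomial.X c) * π (MvPolynomial.X a)) = 0 := by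
    intro a b c h1 h2 h3
    linear_combination hrho a b c h1 h2 h3 -
      (π (MvPolynomial.X c) * π (MvPolynomial.X a)) * (asym a c)
  have hmain : π (MvPolynomial.X p) * π (MvPolynomial.X q) * π (MvPolynomial.X r) = 0 := by
    apply RhoAux.quad (π (MvPolynomial.C (eps k Ω p q))) (π (MvPolynomial.C (eps k Ω p r)))
      (π (MvPolynomial.C (eps k Ω p s))) (π (MvPolynomial.C (eps k Ω q r)))
      (π (MvPolynomial.C (eps k Ω q s))) (π (MvPolynomial.C (eps k Ω r s)))
      (π (MvPolynomial.X p)) (π (MvPolynomial.X q)) (π (MvPolynomial.X r)) (π (MvPolynomial.X s))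
      (sq p q hpq) (sq p r hpr) (sq p s hps) (sq q r hqr) (sq q s hqs) (sq r s hrs)
      (hrel p q r hpq hqr hpr) (hrel p q s hpq hqs hps)
      (hrel p r s hpr hrs hps) (hrel q r s hqr hrs hqs)
    rcases RhoAux.eps_pattern k Ω hΩ p q r s hpq hpr hps hqr hqs hrs with h | h
    · left; rw [← map_mul, ← map_mul, ← map_mul, ← map_mul, h]
    · right; rw [← map_mul, ← map_mul, ← map_mul, ← map_mul, h]
  refine ⟨?_, ?_, ?_⟩
  · rw [← Ideal.Quotient.eq_zero_iff_mem]
    simp only [← hπ, map_mul]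
    exact hmain
  · rw [← Ideal.Quotient.eq_zero_iff_mem]
    simp only [← hπ, map_sub, map_mul, map_pow]
    have h := hrho p q r hpq hqr hpr
    linear_combination (π (MvPolynomial.X p)) * h -
      (π (MvPolynomial.C (eps k Ω q r))) * hmain -
      (π (MvPolynomial.X p) * π (MvPolynomial.X p) * π (MvPolynomial.X r)) * (asym p r)
  · rw [← Ideal.Quotient.eq_zero_iff_mem]
    simp only [← hπ, map_mul, map_pow]
    have h := hrho p q r hpq hqr hpr
    linear_combination (π (MvPolynomial.C (eps k Ω p q)) * π (MvPolynomial.X p) *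
        π (MvPolynomial.X q)) * h -
      (π (MvPolynomial.X p) * π (MvPolynomial.X p) * π (MvPolynomial.X q) *
        π (MvPolynomial.X q)) * (sq p q hpq) -
      (π (MvPolynomial.C (eps k Ω p q)) * π (MvPolynomial.C (eps k Ω q r)) *
        π (MvPolynomial.X q)) * hmain -
      (π (MvPolynomial.C (eps k Ω p q)) * π (MvPolynomial.C (eps k Ω r p)) *
        π (MvPolynomial.X p)) * hmain
end

section
/- Suppose Ω satisfies Condition (*), and for distinct p,q,r ∈ {1,…,k+2} set Or_{pqr} = ε^p_q·ε^q_r·ε^r_p. Then for all distinct p,q,r,s ∈ {1,…,k+2}: Or_{pqr} + Or_{prs} + Or_{psq} = Or_{qrs}. -/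
open Finset

open Matrix
section
variable {k : ℕ} (Ω : Matrix (Fin (k + 2)) (Fin k) ℤ)

/-- row index `k` in `Fin (k+2)` -/
def uIdx (k : ℕ) : Fin (k + 2) := Fin.castSucc (Fin.last k)
def vIdx (k : ℕ) : Fin (k + 2) := Fin.last (k + 1)

def Mmat (u v : Fin (k + 2) → ℤ) : Matrix (Fin (k + 2)) (Fin (k + 2)) ℤ :=
  Fin.snoc (Fin.snoc (fun (j : Fin k) (t : Fin (k + 2)) => Ω t j) u) v

lemma Mmat_row_cast (u v : Fin (k + 2) → ℤ) (j : Fin k) :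
    Mmat Ω u v (Fin.castSucc (Fin.castSucc j)) = fun t => Ω t j := by
  simp [Mmat, Fin.snoc_castSucc]

lemma Mmat_row_u (u v : Fin (k + 2) → ℤ) : Mmat Ω u v (uIdx k) = u := by
  simp [Mmat, uIdx, Fin.snoc_castSucc, Fin.snoc_last]

lemma Mmat_row_v (u v : Fin (k + 2) → ℤ) : Mmat Ω u v (vIdx k) = v := by
  simp [Mmat, vIdx, Fin.snoc_last]

lemma Mmat_row_ne (u u' v v' : Fin (k + 2) → ℤ) (r : Fin (k + 2))
    (hu : r ≠ uIdx k) (hv : r ≠ vIdx k) : Mmat Ω u v r = Mmat Ω u' v' r := by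
  induction r using Fin.lastCases with
  | last => exact absurd rfl hv
  | cast r' =>
    induction r' using Fin.lastCases with
    | last => exact absurd rfl hu
    | cast j => rw [Mmat_row_cast, Mmat_row_cast]
end

section
variable {k : ℕ} (Ω : Matrix (Fin (k + 2)) (Fin k) ℤ)

lemma Mmat_row_ne' (u u' v : Fin (k + 2) → ℤ) (r : Fin (k + 2))
    (hu : r ≠ uIdx k) : Mmat Ω u v r = Mmat Ω u' v r := by
  induction r using Fin.lastCases with
  | last => rw [show Fin.last (k+1) = vIdx k from rfl, Mmat_row_v, Mmat_row_v]
  | cast r' =>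
    induction r' using Fin.lastCases with
    | last => exact absurd rfl hu
    | cast j => rw [Mmat_row_cast, Mmat_row_cast]

def Cof (v : Fin (k + 2) → ℤ) (j : Fin (k + 2)) : ℤ :=
  ((Mmat Ω 0 v).submatrix (uIdx k).succAbove j.succAbove).det

lemma det_Mmat_expand (u v : Fin (k + 2) → ℤ) :
    (Mmat Ω u v).det = ∑ j : Fin (k + 2), (-1) ^ (k + (j : ℕ)) * u j * Cof Ω v j := by
  rw [Matrix.det_succ_row (Mmat Ω u v) (uIdx k)]
  refine Finset.sum_congr rfl fun j _ => ?_
  have h1 : ((uIdx k : ℕ) + (j : ℕ)) = k + (j : ℕ) := by simp [uIdx]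
  have h2 : Mmat Ω u v (uIdx k) j = u j := by rw [Mmat_row_u]
  have h3 : (Mmat Ω u v).submatrix (uIdx k).succAbove j.succAbove
      = (Mmat Ω 0 v).submatrix (uIdx k).succAbove j.succAbove := by
    ext i j'
    rw [Matrix.submatrix_apply, Matrix.submatrix_apply]
    exact congrFun (Mmat_row_ne' Ω u 0 v _ (Fin.succAbove_ne _ _)) _
  rw [h1, h2, h3, Cof]

lemma det_Mmat_single (t : Fin (k + 2)) (v : Fin (k + 2) → ℤ) :
    (Mmat Ω (Pi.single t 1) v).det = (-1) ^ (k + (t : ℕ)) * Cof Ω v t := by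
  rw [det_Mmat_expand, Finset.sum_eq_single t]
  · simp
  · intro b _ hb
    simp [Pi.single_eq_of_ne hb]
  · simp

lemma Mmat_col_det_zero (i : Fin k) (v : Fin (k + 2) → ℤ) :
    (Mmat Ω (fun t => Ω t i) v).det = 0 := by
  refine Matrix.det_zero_of_row_eq (i := Fin.castSucc (Fin.castSucc i)) (j := uIdx k)
    ?_ ?_
  · simp only [uIdx, Fin.ext_iff, Fin.coe_castSucc, Fin.val_last, ne_eq]
    exact fun h => absurd h (Nat.ne_of_lt i.isLt)
  · rw [Mmat_row_cast, Mmat_row_u]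

lemma kernel_sum (i : Fin k) (v : Fin (k + 2) → ℤ) :
    ∑ t, Ω t i * (Mmat Ω (Pi.single t 1) v).det = 0 := by
  have h0 := Mmat_col_det_zero Ω i v
  rw [det_Mmat_expand] at h0
  rw [← h0]
  refine Finset.sum_congr rfl fun t _ => ?_
  rw [det_Mmat_single]
  ring

lemma Mmat_swap (u v : Fin (k + 2) → ℤ) :
    Mmat Ω v u = (Mmat Ω u v).submatrix (Equiv.swap (uIdx k) (vIdx k)) id := by
  have huv : uIdx k ≠ vIdx k := by
    simp only [uIdx, vIdx, Fin.ext_iff, Fin.coe_castSucc, Fin.val_last, ne_eq]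
    omega
  ext i j
  rw [Matrix.submatrix_apply, id_eq]
  rcases eq_or_ne i (uIdx k) with rfl | hu
  · rw [Equiv.swap_apply_left]
    rw [congrFun (Mmat_row_u Ω v u) j, congrFun (Mmat_row_v Ω u v) j]
  rcases eq_or_ne i (vIdx k) with rfl | hv
  · rw [Equiv.swap_apply_right]
    rw [congrFun (Mmat_row_v Ω v u) j, congrFun (Mmat_row_u Ω u v) j]
  · rw [Equiv.swap_apply_of_ne_of_ne hu hv]
    exact congrFun (Mmat_row_ne Ω v u u v i hu hv) j

lemma det_Mmat_antisymm (u v : Fin (k + 2) → ℤ) :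
    (Mmat Ω v u).det = -(Mmat Ω u v).det := by
  have huv : uIdx k ≠ vIdx k := by
    simp only [uIdx, vIdx, Fin.ext_iff, Fin.coe_castSucc, Fin.val_last, ne_eq]
    omega
  rw [Mmat_swap, Matrix.det_permute, Equiv.Perm.sign_swap huv]
  simp

end

section
variable {k : ℕ} (Ω : Matrix (Fin (k + 2)) (Fin k) ℤ)

/-- The bilinear pairing `W p q = det [Ωᵀ; e_p; e_q]`. -/
def Wd (p q : Fin (k + 2)) : ℤ := (Mmat Ω (Pi.single p 1) (Pi.single q 1)).det

lemma Wd_antisymm (p q : Fin (k + 2)) : Wd Ω p q = -Wd Ω q p :=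
  (det_Mmat_antisymm Ω (Pi.single q 1) (Pi.single p 1))

lemma Wd_kernel (i : Fin k) (x : Fin (k + 2)) : ∑ t, Ω t i * Wd Ω t x = 0 :=
  kernel_sum Ω i (Pi.single x 1)

lemma Wd_eq (p q : Fin (k + 2)) (hpq : p ≠ q) :
    Wd Ω p q = (if p < q then -1 else 1) * (-1) ^ ((p : ℕ) + (q : ℕ)) * Delta k Ω p q := by
  obtain ⟨p', hp'⟩ := Fin.exists_succAbove_eq hpq
  have hcard : ({p, q}ᶜ : Finset (Fin (k + 2))).card = k := by
    rw [Finset.card_compl, Finset.card_pair hpq]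
    simp
  have hvIdx : (vIdx k).succAbove = Fin.castSucc := Fin.succAbove_last
  have e1 : (Mmat Ω (Pi.single p 1) (Pi.single q 1)).det
      = (-1) ^ ((k + 1) + (q : ℕ)) *
        ((Mmat Ω (Pi.single p 1) (Pi.single q 1)).submatrix (vIdx k).succAbove q.succAbove).det := by
    rw [Matrix.det_succ_row (Mmat Ω (Pi.single p 1) (Pi.single q 1)) (vIdx k),
      Finset.sum_eq_single q]
    · rw [congrFun (Mmat_row_v Ω (Pi.single p 1) (Pi.single q 1)) q]
      simp [vIdx]
    · intro b _ hb
      rw [congrFun (Mmat_row_v Ω (Pi.single p 1) (Pi.single q 1)) b, Pi.single_eq_of_ne hb]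
      ring
    · simp
  have hrowu : ∀ b : Fin (k + 1),
      ((Mmat Ω (Pi.single p 1) (Pi.single q 1)).submatrix (vIdx k).succAbove q.succAbove)
        (Fin.last k) b = (Pi.single p (1 : ℤ) : Fin (k + 2) → ℤ) (q.succAbove b) := by
    intro b
    rw [Matrix.submatrix_apply, hvIdx]
    exact congrFun (Mmat_row_u Ω (Pi.single p 1) (Pi.single q 1)) _
  have e2 : ((Mmat Ω (Pi.single p 1) (Pi.single q 1)).submatrix (vIdx k).succAbove q.succAbove).det
      = (-1) ^ (k + (p' : ℕ)) *
        (((Mmat Ω (Pi.single p 1) (Pi.single q 1)).submatrix (vIdx k).succAbove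
            q.succAbove).submatrix (Fin.last k).succAbove p'.succAbove).det := by
    rw [Matrix.det_succ_row _ (Fin.last k), Finset.sum_eq_single p']
    · rw [hrowu p', hp', Pi.single_eq_same]
      simp
    · intro b _ hb
      rw [hrowu b, Pi.single_eq_of_ne, mul_zero, zero_mul]
      intro h
      exact hb (Fin.succAbove_right_injective (h.trans hp'.symm))
    · simp
  have hM2' : (((Mmat Ω (Pi.single p 1) (Pi.single q 1)).submatrix (vIdx k).succAbove
        q.succAbove).submatrix (Fin.last k).succAbove p'.succAbove)
      = (Ω.submatrix (fun j => q.succAbove (p'.succAbove j)) id)ᵀ := by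
    ext i j
    rw [Matrix.submatrix_apply, Matrix.submatrix_apply, hvIdx, Fin.succAbove_last,
      Matrix.transpose_apply, Matrix.submatrix_apply, id_eq]
    exact congrFun (Mmat_row_cast Ω (Pi.single p 1) (Pi.single q 1) i) _
  have hf : (fun j => q.succAbove (p'.succAbove j))
      = ⇑(({p, q}ᶜ : Finset (Fin (k + 2))).orderEmbOfFin hcard) := by
    refine Finset.orderEmbOfFin_unique hcard (fun x => ?_) ?_
    · simp only [Finset.mem_compl, Finset.mem_insert, Finset.mem_singleton, not_or]
      refine ⟨fun h => ?_, Fin.succAbove_ne q _⟩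
      rw [← hp'] at h
      exact Fin.succAbove_ne p' x (Fin.succAbove_right_injective h)
    · exact (Fin.strictMono_succAbove q).comp (Fin.strictMono_succAbove p')
  have hD : Delta k Ω p q
      = (Ω.submatrix (⇑(({p, q}ᶜ : Finset (Fin (k + 2))).orderEmbOfFin hcard)) id).det := by
    rw [Delta, minorDet, dif_pos hcard]
  have e3 : (((Mmat Ω (Pi.single p 1) (Pi.single q 1)).submatrix (vIdx k).succAbove
        q.succAbove).submatrix (Fin.last k).succAbove p'.succAbove).det = Delta k Ω p q := by
    rw [hM2', Matrix.det_transpose, hf, hD]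
  have hsgn : ∀ a b : ℕ, ((-1 : ℤ) ^ ((k + 1) + a)) * (-1) ^ (k + b) = -((-1 : ℤ) ^ (a + b)) := by
    intro a b
    rw [← pow_add]
    have h : (k + 1) + a + (k + b) = 2 * k + 1 + (a + b) := by ring
    rw [h, pow_add, pow_add, pow_mul]
    norm_num
  have key : Wd Ω p q = (-1) ^ ((k + 1) + (q : ℕ)) * ((-1) ^ (k + (p' : ℕ)) * Delta k Ω p q) := by
    rw [Wd, e1, e2, e3]
  rw [key, ← mul_assoc, hsgn]
  rcases lt_or_ge (Fin.castSucc p') q with hc | hc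
  · have hcp : Fin.castSucc p' = p := by rw [← hp', Fin.succAbove_of_castSucc_lt _ _ hc]
    have hval : (p' : ℕ) = (p : ℕ) := by rw [← hcp]; rfl
    have hlt : p < q := hcp ▸ hc
    rw [if_pos hlt, hval, add_comm (q : ℕ) (p : ℕ)]
    ring
  · have hcp : Fin.succ p' = p := by rw [← hp', Fin.succAbove_of_le_castSucc _ _ hc]
    have hval : (p : ℕ) = (p' : ℕ) + 1 := by rw [← hcp]; rfl
    have hlt : q < p := lt_of_le_of_lt hc (hcp ▸ (Fin.castSucc_lt_succ (i := p')))
    rw [if_neg (asymm hlt), hval]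
    rw [show (p' : ℕ) + 1 + (q : ℕ) = (q : ℕ) + (p' : ℕ) + 1 by ring, pow_succ]
    ring
end

section
variable {k : ℕ} (Ω : Matrix (Fin (k + 2)) (Fin k) ℤ)

lemma Wd_self (a : Fin (k + 2)) : Wd Ω a a = 0 := by
  have := Wd_antisymm Ω a a
  omega

lemma tdagger (hΩ : CondStar k Ω) (p q r s : Fin (k + 2))
    (hpq : p ≠ q) (hsp : s ≠ p) (hsq : s ≠ q) :
    Wd Ω p q * Wd Ω q p * Wd Ω s r
      = Wd Ω q r * Wd Ω p q * Wd Ω s p + Wd Ω p r * Wd Ω q p * Wd Ω s q := by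
  have hcard : ({p, q}ᶜ : Finset (Fin (k + 2))).card = k := by
    rw [Finset.card_compl, Finset.card_pair hpq]
    simp
  set z : Fin (k + 2) → ℤ := fun t =>
    (Wd Ω p q * Wd Ω q p) * Wd Ω t r - (Wd Ω q r * Wd Ω p q) * Wd Ω t p
      - (Wd Ω p r * Wd Ω q p) * Wd Ω t q with hz
  have hzp : z p = 0 := by
    rw [hz]
    simp only [Wd_self]
    ring
  have hzq : z q = 0 := by
    rw [hz]
    simp only [Wd_self]
    ring
  have hker : ∀ i, ∑ t, Ω t i * z t = 0 := by
    intro i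
    have h1 := Wd_kernel Ω i r
    have h2 := Wd_kernel Ω i p
    have h3 := Wd_kernel Ω i q
    calc ∑ t, Ω t i * z t
        = (Wd Ω p q * Wd Ω q p) * (∑ t, Ω t i * Wd Ω t r)
          - (Wd Ω q r * Wd Ω p q) * (∑ t, Ω t i * Wd Ω t p)
          - (Wd Ω p r * Wd Ω q p) * (∑ t, Ω t i * Wd Ω t q) := by
          rw [Finset.mul_sum, Finset.mul_sum, Finset.mul_sum, ← Finset.sum_sub_distrib,
            ← Finset.sum_sub_distrib]
          exact Finset.sum_congr rfl fun t _ => by ring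
      _ = 0 := by rw [h1, h2, h3]; ring
  set E := ({p, q}ᶜ : Finset (Fin (k + 2))).orderEmbOfFin hcard with hE
  have himg : Finset.image (⇑E) Finset.univ = ({p, q}ᶜ : Finset (Fin (k + 2))) := by
    apply Finset.eq_of_subset_of_card_le
    · intro x hx
      obtain ⟨j, _, rfl⟩ := Finset.mem_image.mp hx
      exact Finset.orderEmbOfFin_mem _ hcard j
    · rw [hcard, Finset.card_image_of_injective _ E.injective, Finset.card_univ,
        Fintype.card_fin]
  have hsum : ∀ i, ∑ j : Fin k, Ω (E j) i * z (E j) = 0 := by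
    intro i
    have hsplit := Finset.sum_compl_add_sum ({p, q} : Finset (Fin (k + 2)))
      (fun t => Ω t i * z t)
    have hpair : ∑ t ∈ ({p, q} : Finset (Fin (k + 2))), Ω t i * z t = 0 := by
      rw [Finset.sum_pair hpq, hzp, hzq]
      ring
    have htot := hker i
    have hcompl : ∑ t ∈ ({p, q}ᶜ : Finset (Fin (k + 2))), Ω t i * z t = 0 := by
      rw [hpair, htot] at hsplit
      linarith
    rw [← hcompl, ← himg, Finset.sum_image (fun x _ y _ h => E.injective h)]
  have hmv : (Ω.submatrix (⇑E) id)ᵀ.mulVec (z ∘ ⇑E) = 0 := by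
    funext i
    show ∑ j, (Ω.submatrix (⇑E) id)ᵀ i j * (z ∘ ⇑E) j = 0
    calc ∑ j, (Ω.submatrix (⇑E) id)ᵀ i j * (z ∘ ⇑E) j
        = ∑ j : Fin k, Ω (E j) i * z (E j) := by
          exact Finset.sum_congr rfl fun j _ => rfl
      _ = 0 := hsum i
  have hdet : (Ω.submatrix (⇑E) id)ᵀ.det ≠ 0 := by
    rw [Matrix.det_transpose]
    have hD : Delta k Ω p q = (Ω.submatrix (⇑E) id).det := by
      rw [Delta, minorDet, dif_pos hcard]
    rw [← hD]
    exact hΩ.1 p q hpq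
  have hzero : (z ∘ ⇑E) = 0 := by
    have h1 : ((Ω.submatrix (⇑E) id)ᵀ.adjugate * (Ω.submatrix (⇑E) id)ᵀ).mulVec (z ∘ ⇑E) = 0 := by
      rw [← Matrix.mulVec_mulVec, hmv, Matrix.mulVec_zero]
    rw [Matrix.adjugate_mul, Matrix.smul_mulVec, Matrix.one_mulVec] at h1
    rcases smul_eq_zero.mp h1 with h | h
    · exact absurd h hdet
    · exact h
  have hsmem : s ∈ ({p, q}ᶜ : Finset (Fin (k + 2))) := by
    simp only [Finset.mem_compl, Finset.mem_insert, Finset.mem_singleton, not_or]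
    exact ⟨hsp, hsq⟩
  obtain ⟨j, hj⟩ : ∃ j, E j = s := by
    have hrange := Finset.range_orderEmbOfFin ({p, q}ᶜ : Finset (Fin (k + 2))) hcard
    have : s ∈ Set.range (⇑E) := by
      rw [hE, hrange]
      exact_mod_cast hsmem
    exact this
  have hzs : z s = 0 := by
    rw [← hj]
    exact congrFun hzero j
  rw [hz] at hzs
  simp only at hzs
  linarith

end

section
variable {k : ℕ} (Ω : Matrix (Fin (k + 2)) (Fin k) ℤ)

lemma Wd_ne_zero (p q : Fin (k + 2)) (hpq : p ≠ q) (hΔ : Delta k Ω p q ≠ 0) :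
    Wd Ω p q ≠ 0 := by
  rw [Wd_eq Ω p q hpq]
  refine mul_ne_zero (mul_ne_zero ?_ ?_) hΔ
  · rcases lt_or_ge p q with h | h
    · rw [if_pos h]; norm_num
    · rw [if_neg (not_lt.mpr h)]; norm_num
  · exact pow_ne_zero _ (by norm_num)

lemma eps_eq_sign_Wd (p q : Fin (k + 2)) (hpq : p ≠ q) :
    eps k Ω p q = (Wd Ω p q).sign := by
  rw [Wd_eq Ω p q hpq, eps, Int.sign_mul, Int.sign_mul]
  have h1 : (((if p < q then -1 else 1) : ℤ)).sign = if p < q then -1 else 1 := by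
    rcases lt_or_ge p q with h | h
    · rw [if_pos h]; decide
    · rw [if_neg (not_lt.mpr h)]; decide
  have h2 : ((-1 : ℤ) ^ ((p : ℕ) + (q : ℕ))).sign = (-1 : ℤ) ^ ((p : ℕ) + (q : ℕ)) := by
    rcases Nat.even_or_odd ((p : ℕ) + (q : ℕ)) with h | h
    · rw [h.neg_one_pow]; decide
    · rw [h.neg_one_pow]; decide
  have h3 : ((p : ℤ) - (q : ℤ)).sign = if p < q then -1 else 1 := by
    rcases hpq.lt_or_gt with h | h
    · rw [if_pos h]
      exact Int.sign_eq_neg_one_iff_neg.mpr (by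
        have : (p : ℕ) < (q : ℕ) := h
        omega)
    · rw [if_neg (asymm h)]
      exact Int.sign_eq_one_iff_pos.mpr (by
        have : (q : ℕ) < (p : ℕ) := h
        omega)
  rw [h1, h2, h3]
  ring

lemma sign_pm (x : ℤ) (hx : x ≠ 0) : x.sign = 1 ∨ x.sign = -1 := by
  rcases lt_trichotomy x 0 with h | h | h
  · exact Or.inr (Int.sign_eq_neg_one_iff_neg.mpr h)
  · exact absurd h hx
  · exact Or.inl (Int.sign_eq_one_iff_pos.mpr h)

lemma tsign (hΩ : CondStar k Ω) (p q r s : Fin (k + 2))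
    (hpq : p ≠ q) (hpr : p ≠ r) (hqr : q ≠ r) (hsp : s ≠ p) (hsq : s ≠ q)
    (h : (Wd Ω q r * Wd Ω p q * Wd Ω s p).sign = (Wd Ω p r * Wd Ω q p * Wd Ω s q).sign) :
    (Wd Ω p q * Wd Ω q p * Wd Ω s r).sign = (Wd Ω q r * Wd Ω p q * Wd Ω s p).sign := by
  have hd := tdagger Ω hΩ p q r s hpq hsp hsq
  have wne : ∀ a b : Fin (k + 2), a ≠ b → Wd Ω a b ≠ 0 := fun a b hab =>
    Wd_ne_zero Ω a b hab (hΩ.1 a b hab)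
  have hb : Wd Ω q r * Wd Ω p q * Wd Ω s p ≠ 0 :=
    mul_ne_zero (mul_ne_zero (wne q r hqr) (wne p q hpq)) (wne s p hsp)
  have hc : Wd Ω p r * Wd Ω q p * Wd Ω s q ≠ 0 :=
    mul_ne_zero (mul_ne_zero (wne p r hpr) (wne q p hpq.symm)) (wne s q hsq)
  rw [hd, Int.sign_add_eq_of_sign_eq h]
  exact h.symm

end

/-- `Or_{pqr} + Or_{prs} + Or_{psq} = Or_{qrs}` where `Or_{pqr} = ε^p_q ε^q_r ε^r_p`. -/
theorem orientation_identity (k : ℕ) (hk : 2 ≤ k) (Ω : Matrix (Fin (k + 2)) (Fin k) ℤ)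
    (hΩ : CondStar k Ω) (p q r s : Fin (k + 2))
    (hpq : p ≠ q) (hpr : p ≠ r) (hps : p ≠ s) (hqr : q ≠ r) (hqs : q ≠ s) (hrs : r ≠ s) :
    eps k Ω p q * eps k Ω q r * eps k Ω r p +
    eps k Ω p r * eps k Ω r s * eps k Ω s p +
    eps k Ω p s * eps k Ω s q * eps k Ω q p =
    eps k Ω q r * eps k Ω r s * eps k Ω s q := by
  have hne := hΩ.1
  have wne : ∀ a b : Fin (k + 2), a ≠ b → Wd Ω a b ≠ 0 := fun a b hab =>
    Wd_ne_zero Ω a b hab (hne a b hab)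
  rw [eps_eq_sign_Wd Ω p q hpq, eps_eq_sign_Wd Ω q r hqr, eps_eq_sign_Wd Ω r p hpr.symm,
    eps_eq_sign_Wd Ω p r hpr, eps_eq_sign_Wd Ω r s hrs, eps_eq_sign_Wd Ω s p hps.symm,
    eps_eq_sign_Wd Ω p s hps, eps_eq_sign_Wd Ω s q hqs.symm, eps_eq_sign_Wd Ω q p hpq.symm]
  have H1 := tsign Ω hΩ p q r s hpq hpr hqr hps.symm hqs.symm
  have H2 := tsign Ω hΩ p q s r hpq hps hqs hpr.symm hqr.symm
  have H3 := tsign Ω hΩ p r q s hpr hpq hqr.symm hps.symm hrs.symm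
  have H4 := tsign Ω hΩ p r s q hpr hps hrs hpq.symm hqr
  have rqp : (Wd Ω q p).sign = -(Wd Ω p q).sign := by rw [Wd_antisymm Ω q p, Int.sign_neg]
  have rrp : (Wd Ω r p).sign = -(Wd Ω p r).sign := by rw [Wd_antisymm Ω r p, Int.sign_neg]
  have rsp : (Wd Ω s p).sign = -(Wd Ω p s).sign := by rw [Wd_antisymm Ω s p, Int.sign_neg]
  have rrq : (Wd Ω r q).sign = -(Wd Ω q r).sign := by rw [Wd_antisymm Ω r q, Int.sign_neg]
  have rsq : (Wd Ω s q).sign = -(Wd Ω q s).sign := by rw [Wd_antisymm Ω s q, Int.sign_neg]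
  have rsr : (Wd Ω s r).sign = -(Wd Ω r s).sign := by rw [Wd_antisymm Ω s r, Int.sign_neg]
  simp only [Int.sign_mul, rqp, rrp, rsp, rrq, rsq, rsr] at H1 H2 H3 H4 ⊢
  rcases sign_pm _ (wne p q hpq) with ha | ha <;> rw [ha] at H1 H2 H3 H4 ⊢ <;>
  rcases sign_pm _ (wne p r hpr) with hb | hb <;> rw [hb] at H1 H2 H3 H4 ⊢ <;>
  rcases sign_pm _ (wne p s hps) with hc | hc <;> rw [hc] at H1 H2 H3 H4 ⊢ <;>
  rcases sign_pm _ (wne q r hqr) with hd | hd <;> rw [hd] at H1 H2 H3 H4 ⊢ <;>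
  rcases sign_pm _ (wne q s hqs) with he | he <;> rw [he] at H1 H2 H3 H4 ⊢ <;>
  rcases sign_pm _ (wne r s hrs) with hf | hf <;> rw [hf] at H1 H2 H3 H4 ⊢ <;>
  revert H1 H2 H3 H4 <;> decide
end
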